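/- arXiv:1711.08555 — 2 statements merged into one kernel-verified Lean document; each statement's English description precedes it below -/
import Mathlib

section
/- Let m ≥ 2 and let T be the perfect unrooted m-ary tree of diameter D. Then for every odd integer t with 1 ≤ t ≤ D, the number of paths of length t in T equals m^((t-1)/2) · (V(D) − V(t−1)), where V(d) is the number of vertices in the perfect unrooted m-ary tree of diameter d. -/
open SimpleGraph Finset

/-- `IsPerfectUnrootedMary m d H` says that `H` is the perfect unrooted `m`-ary tree of
diameter `d`: a tree in which every vertex has degree `1` or `m + 1`, whose maximum
distance between two vertices is `d`, and in which every degree-`1` vertex is at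
distance `d` from some other vertex.  (For `d = 0` the degree condition is dropped,
so that the one-vertex tree is the perfect tree of diameter `0`.) -/
def IsPerfectUnrootedMary (m d : ℕ) {W : Type} [Fintype W] (H : SimpleGraph W)
    [DecidableRel H.Adj] : Prop :=
  H.IsTree ∧
    (0 < d → ∀ v : W, H.degree v = 1 ∨ H.degree v = m + 1) ∧
    (∀ u v : W, H.dist u v ≤ d) ∧
    (∃ u v : W, H.dist u v = d) ∧
    (∀ v : W, H.degree v = 1 → ∃ u : W, H.dist u v = d)

/-- The number of paths of length `t` in `H`, i.e. the number of unordered pairs of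
vertices at distance exactly `t` from each other. -/
noncomputable def pathCount {W : Type} [Fintype W] [DecidableEq W] (H : SimpleGraph W) (t : ℕ) : ℕ :=
  (Finset.univ.filter fun p : Sym2 W => ∃ u v : W, p = s(u, v) ∧ H.dist u v = t).card

set_option linter.unusedSectionVars false
set_option linter.unusedVariables false

section TreeCore
variable {W : Type} [DecidableEq W] {G : SimpleGraph W}

lemma tree_path_unique (hT : G.IsTree) {u v : W} {p q : G.Walk u v}
    (hp : p.IsPath) (hq : q.IsPath) : p = q :=
  (hT.existsUnique_path u v).unique hp hq

lemma tree_length_eq_dist (hT : G.IsTree) {u v : W} (p : G.Walk u v) (hp : p.IsPath) :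
    p.length = G.dist u v := by
  obtain ⟨w, hw⟩ := hT.isConnected.exists_walk_length_eq_dist u v
  have hb : w.bypass.IsPath := w.bypass_isPath
  have h1 : p.length ≤ w.length := (tree_path_unique hT hp hb) ▸ w.length_bypass_le
  exact le_antisymm (hw ▸ h1) (SimpleGraph.dist_le p)

/-- the unique path between two vertices of a tree -/
noncomputable def tpath (hT : G.IsTree) (u v : W) : G.Walk u v :=
  ((hT.existsUnique_path u v).exists).choose

lemma tpath_isPath (hT : G.IsTree) (u v : W) : (tpath hT u v).IsPath :=
  ((hT.existsUnique_path u v).exists).choose_spec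

lemma tpath_length (hT : G.IsTree) (u v : W) : (tpath hT u v).length = G.dist u v :=
  tree_length_eq_dist hT _ (tpath_isPath hT u v)

lemma walk_dist_getVert_le (hc : G.Connected) {u v : W} (p : G.Walk u v) :
    ∀ i, i ≤ p.length → G.dist u (p.getVert i) ≤ i := by
  intro i
  induction i with
  | zero => intro _; simp [Walk.getVert_zero]
  | succ n ih =>
    intro hn
    have h1 : G.Adj (p.getVert n) (p.getVert (n+1)) := p.adj_getVert_succ (by omega)
    have h2 : G.dist (p.getVert n) (p.getVert (n+1)) ≤ 1 := by
      rw [SimpleGraph.dist_eq_one_iff_adj.mpr h1]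
    calc G.dist u (p.getVert (n+1)) ≤ G.dist u (p.getVert n) + G.dist (p.getVert n) (p.getVert (n+1)) :=
          hc.dist_triangle
      _ ≤ n + 1 := by have := ih (by omega); omega

lemma tree_dist_getVert (hT : G.IsTree) {u v : W} (p : G.Walk u v) (hp : p.IsPath)
    {i : ℕ} (hi : i ≤ p.length) :
    G.dist u (p.getVert i) = i ∧ G.dist (p.getVert i) v = p.length - i := by
  have h1 : G.dist u (p.getVert i) ≤ i := walk_dist_getVert_le hT.isConnected p i hi
  have h2 : G.dist (p.getVert i) v ≤ p.length - i := by
    have hrev : p.reverse.getVert (p.length - i) = p.getVert i := by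
      rw [Walk.getVert_reverse]
      congr 1
      omega
    have := walk_dist_getVert_le hT.isConnected p.reverse (p.length - i)
      (by rw [Walk.length_reverse]; omega)
    rw [hrev] at this
    rwa [SimpleGraph.dist_comm]
  have h3 : G.dist u v = p.length := (tree_length_eq_dist hT p hp).symm
  have h4 : G.dist u v ≤ G.dist u (p.getVert i) + G.dist (p.getVert i) v :=
    hT.isConnected.dist_triangle
  omega

lemma tree_dist_split (hT : G.IsTree) {u v w : W} {p : G.Walk u v} (hp : p.IsPath)
    (hw : w ∈ p.support) :
    G.dist u v = G.dist u w + G.dist w v := by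
  obtain ⟨i, hgv, hi⟩ := Walk.mem_support_iff_exists_getVert.mp hw
  obtain ⟨ha, hb⟩ := tree_dist_getVert hT p hp hi
  rw [hgv] at ha hb
  have := tree_length_eq_dist hT p hp
  omega

lemma adj_dist_ne (hT : G.IsTree) {p q : W} (hpq : G.Adj p q) (u : W) :
    G.dist u p ≠ G.dist u q := by
  intro h
  have hppath := tpath_isPath hT p u
  have hnq : q ∉ (tpath hT p u).support := by
    intro hmem
    have := tree_dist_split hT hppath hmem
    have hd1 : G.dist p q = 1 := SimpleGraph.dist_eq_one_iff_adj.mpr hpq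
    have e1 : G.dist u p = G.dist p u := SimpleGraph.dist_comm
    have e2 : G.dist u q = G.dist q u := SimpleGraph.dist_comm
    omega
  have hQ : (Walk.cons hpq.symm (tpath hT p u)).IsPath := hppath.cons hnq
  have hlen := tree_length_eq_dist hT _ hQ
  rw [Walk.length_cons, tpath_length] at hlen
  have e1 : G.dist u p = G.dist p u := SimpleGraph.dist_comm
  have e2 : G.dist u q = G.dist q u := SimpleGraph.dist_comm
  omega

lemma adj_dist_cases (hT : G.IsTree) {p q : W} (hpq : G.Adj p q) (u : W) :
    G.dist u q = G.dist u p + 1 ∨ G.dist u p = G.dist u q + 1 := by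
  have h1 : G.dist u q ≤ G.dist u p + 1 := by
    have := hT.isConnected.dist_triangle (u := u) (v := p) (w := q)
    have hd1 : G.dist p q = 1 := SimpleGraph.dist_eq_one_iff_adj.mpr hpq
    omega
  have h2 : G.dist u p ≤ G.dist u q + 1 := by
    have := hT.isConnected.dist_triangle (u := u) (v := q) (w := p)
    have hd1 : G.dist q p = 1 := SimpleGraph.dist_eq_one_iff_adj.mpr hpq.symm
    omega
  have := adj_dist_ne hT hpq u
  omega




/-- being on the `p`-side of the edge `pq` propagates along paths toward `p` -/
lemma side_of_mem_path (hT : G.IsTree) {p q : W} (hpq : G.Adj p q) {u w : W}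
    (hu : G.dist u p < G.dist u q) {r : G.Walk u p} (hr : r.IsPath)
    (hw : w ∈ r.support) : G.dist w p < G.dist w q := by
  have hsplit := tree_dist_split hT hr hw
  have h1 : G.dist u q ≤ G.dist u w + G.dist w q := hT.isConnected.dist_triangle
  have h2 : G.dist u q = G.dist u p + 1 := by
    rcases adj_dist_cases hT hpq u with h | h
    · exact h
    · omega
  omega

/-- the crossing path: for `u` on the `p` side and `v` on the `q` side of edge `pq`,
the concatenation path `u → p → q → v`. -/
lemma crossing_walk_isPath (hT : G.IsTree) {p q : W} (hpq : G.Adj p q) {u v : W}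
    (hu : G.dist u p < G.dist u q) (hv : G.dist v q < G.dist v p) :
    ((tpath hT u p).append (Walk.cons hpq (tpath hT q v))).IsPath := by
  rw [Walk.isPath_def, Walk.support_append]
  have h1 : (tpath hT u p).support.Nodup := (tpath_isPath hT u p).support_nodup
  have h2 : (Walk.cons hpq (tpath hT q v)).support.tail = (tpath hT q v).support := by
    simp [Walk.support_cons]
  rw [h2]
  have h3 : (tpath hT q v).support.Nodup := (tpath_isPath hT q v).support_nodup
  refine List.Nodup.append h1 h3 ?_
  intro w hw1 hw2
  have hs1 : G.dist w p < G.dist w q := side_of_mem_path hT hpq hu (tpath_isPath hT u p) hw1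
  have hs2 : G.dist w q < G.dist w p := by
    have hv' : G.dist v q < G.dist v p := hv
    have hmem : w ∈ (tpath hT v q).support := by
      have hrev : (tpath hT v q) = (tpath hT q v).reverse :=
        tree_path_unique hT (tpath_isPath hT v q) ((tpath_isPath hT q v).reverse)
      rw [hrev, Walk.support_reverse, List.mem_reverse]
      exact hw2
    exact side_of_mem_path hT hpq.symm hv' (tpath_isPath hT v q) hmem
  omega

lemma crossing_dist (hT : G.IsTree) {p q : W} (hpq : G.Adj p q) {u v : W}
    (hu : G.dist u p < G.dist u q) (hv : G.dist v q < G.dist v p) :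
    G.dist u v = G.dist u p + 1 + G.dist q v := by
  have hP := crossing_walk_isPath hT hpq hu hv
  have := tree_length_eq_dist hT _ hP
  rw [Walk.length_append, Walk.length_cons, tpath_length, tpath_length] at this
  omega

/-- the crossing path is *the* path, and `p`, `q` sit at positions `d(u,p)`, `d(u,p)+1`. -/
lemma crossing_getVert (hT : G.IsTree) {p q : W} (hpq : G.Adj p q) {u v : W}
    (hu : G.dist u p < G.dist u q) (hv : G.dist v q < G.dist v p) :
    (tpath hT u v).getVert (G.dist u p) = p ∧
      (tpath hT u v).getVert (G.dist u p + 1) = q := by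
  have hP := crossing_walk_isPath hT hpq hu hv
  have heq : tpath hT u v = (tpath hT u p).append (Walk.cons hpq (tpath hT q v)) :=
    tree_path_unique hT (tpath_isPath hT u v) hP
  have hlen : (tpath hT u p).length = G.dist u p := tpath_length hT u p
  constructor
  · rw [heq, Walk.getVert_append]
    simp [hlen]
  · rw [heq, Walk.getVert_append]
    have : ¬ (G.dist u p + 1 < (tpath hT u p).length) := by omega
    rw [if_neg this, hlen]
    simp

/-- existence and position of the middle edge of a path of odd length -/
lemma middle_edge_exists (hT : G.IsTree) {u v : W} {k : ℕ} (huv : G.dist u v = 2 * k + 1) :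
    ∃ p q : W, G.Adj p q ∧ G.dist u p = k ∧ G.dist u q = k + 1 ∧
      G.dist v q = k ∧ G.dist v p = k + 1 := by
  set P := tpath hT u v with hP
  have hlen : P.length = 2 * k + 1 := by rw [tpath_length]; omega
  refine ⟨P.getVert k, P.getVert (k+1), P.adj_getVert_succ (by omega), ?_, ?_, ?_, ?_⟩
  · exact (tree_dist_getVert hT P (tpath_isPath hT u v) (by omega : k ≤ P.length)).1
  · exact (tree_dist_getVert hT P (tpath_isPath hT u v) (by omega : k + 1 ≤ P.length)).1
  · rw [SimpleGraph.dist_comm]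
    have := (tree_dist_getVert hT P (tpath_isPath hT u v) (by omega : k + 1 ≤ P.length)).2
    omega
  · rw [SimpleGraph.dist_comm]
    have := (tree_dist_getVert hT P (tpath_isPath hT u v) (by omega : k ≤ P.length)).2
    omega

lemma middle_edge_unique (hT : G.IsTree) {u v : W} {k : ℕ} {p q p' q' : W}
    (hpq : G.Adj p q) (hp'q' : G.Adj p' q')
    (h1 : G.dist u p = k) (h2 : G.dist u q = k + 1) (h3 : G.dist v q = k) (h4 : G.dist v p = k + 1)
    (h1' : G.dist u p' = k) (h2' : G.dist u q' = k + 1) (h3' : G.dist v q' = k)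
    (h4' : G.dist v p' = k + 1) : p = p' ∧ q = q' := by
  have hu : G.dist u p < G.dist u q := by omega
  have hv : G.dist v q < G.dist v p := by omega
  have hu' : G.dist u p' < G.dist u q' := by omega
  have hv' : G.dist v q' < G.dist v p' := by omega
  have g1 := crossing_getVert hT hpq hu hv
  have g2 := crossing_getVert hT hp'q' hu' hv'
  rw [h1] at g1; rw [h1'] at g2
  exact ⟨g1.1.symm.trans g2.1, g1.2.symm.trans g2.2⟩

/-- each vertex other than `r` has a unique neighbour closer to `r` -/
lemma parent_unique (hT : G.IsTree) (r : W) {w : W} {z z' : W}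
    (hz : G.Adj w z) (hz' : G.Adj w z')
    (hd : G.dist z r + 1 = G.dist w r) (hd' : G.dist z' r + 1 = G.dist w r) : z = z' := by
  have key : ∀ y : W, G.Adj w y → G.dist y r + 1 = G.dist w r →
      y = (tpath hT w r).getVert 1 := by
    intro y hy hyd
    have hnot : w ∉ (tpath hT y r).support := by
      intro hmem
      have := tree_dist_split hT (tpath_isPath hT y r) hmem
      have e : G.dist y w = 1 := SimpleGraph.dist_eq_one_iff_adj.mpr hy.symm
      omega
    have hQ : (Walk.cons hy (tpath hT y r)).IsPath := (tpath_isPath hT y r).cons hnot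
    have heq : tpath hT w r = Walk.cons hy (tpath hT y r) :=
      tree_path_unique hT (tpath_isPath hT w r) hQ
    rw [heq]
    simp [Walk.getVert_cons_succ]
  rw [key z hz hd, key z' hz' hd']

/-- any vertex on the tree path between `u` and `v` is on the path from `z` to `u`
or on the path from `z` to `v`. -/
lemma mem_path_cases (hT : G.IsTree) {u v w : W} (hw : w ∈ (tpath hT u v).support) (z : W) :
    w ∈ (tpath hT z u).support ∨ w ∈ (tpath hT z v).support := by
  set B : G.Walk u v := (tpath hT z u).reverse.append (tpath hT z v) with hB
  have hbp : B.bypass.IsPath := B.bypass_isPath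
  have heq : tpath hT u v = B.bypass := tree_path_unique hT (tpath_isPath hT u v) hbp
  have hsub : w ∈ B.support := B.support_bypass_subset (heq ▸ hw)
  rw [hB, Walk.mem_support_append_iff] at hsub
  rcases hsub with h | h
  · left; rwa [Walk.support_reverse, List.mem_reverse] at h
  · right; exact h
end TreeCore

section Levels
variable {W : Type} [Fintype W] [DecidableEq W] {G : SimpleGraph W} [DecidableRel G.Adj]

/-- vertices at depth `j` in the branch at `r` away from `s` (for an edge `rs`). -/
noncomputable def Lvl (G : SimpleGraph W) (r s : W) (j : ℕ) : Finset W :=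
  univ.filter (fun w => G.dist w r = j ∧ G.dist w s = j + 1)

lemma mem_Lvl {r s w : W} {j : ℕ} :
    w ∈ Lvl G r s j ↔ G.dist w r = j ∧ G.dist w s = j + 1 := by
  simp [Lvl]

lemma Lvl_zero (hT : G.IsTree) {r s : W} (hrs : G.Adj r s) : Lvl G r s 0 = {r} := by
  ext w
  rw [mem_Lvl, Finset.mem_singleton]
  constructor
  · rintro ⟨h1, _⟩
    exact (hT.isConnected.dist_eq_zero_iff).mp h1
  · rintro rfl
    exact ⟨SimpleGraph.dist_self, SimpleGraph.dist_eq_one_iff_adj.mpr hrs⟩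

lemma dist_nbr_cases (hT : G.IsTree) {w z : W} (hwz : G.Adj w z) (r : W) :
    G.dist z r = G.dist w r + 1 ∨ G.dist z r + 1 = G.dist w r := by
  have := adj_dist_cases hT hwz r
  have e1 : G.dist r w = G.dist w r := SimpleGraph.dist_comm
  have e2 : G.dist r z = G.dist z r := SimpleGraph.dist_comm
  omega

lemma children_card (hT : G.IsTree) {m : ℕ} {r s : W} (hrs : G.Adj r s) {j : ℕ} {w : W}
    (hw : w ∈ Lvl G r s j) (hdeg : G.degree w = m + 1) :
    ((G.neighborFinset w) ∩ Lvl G r s (j + 1)).card = m := by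
  rw [mem_Lvl] at hw
  obtain ⟨hwr, hws⟩ := hw
  have hd_rs : G.dist r s = 1 := SimpleGraph.dist_eq_one_iff_adj.mpr hrs
  obtain ⟨σ, hσadj, hσs, hσnot, hσkey⟩ :
      ∃ σ : W, G.Adj w σ ∧ G.dist σ s + 1 = G.dist w s ∧ σ ∉ Lvl G r s (j + 1) ∧
        ∀ z : W, G.Adj w z → z ≠ σ → G.dist z r = j + 1 := by
    rcases Nat.eq_zero_or_pos j with hj | hj
    · subst hj
      have hwr0 : w = r := (hT.isConnected.dist_eq_zero_iff).mp hwr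
      subst hwr0
      refine ⟨s, hrs, by simp [SimpleGraph.dist_self, hws], ?_, ?_⟩
      · rw [mem_Lvl]
        simp [SimpleGraph.dist_self]
      · intro z hz _
        rw [SimpleGraph.dist_comm]
        exact SimpleGraph.dist_eq_one_iff_adj.mpr hz
    · have hlen : (tpath hT w r).length = j := by rw [tpath_length, hwr]
      set σ := (tpath hT w r).getVert 1 with hσ
      have h1 : G.Adj w σ := by
        have := (tpath hT w r).adj_getVert_succ (i := 0) (by omega)
        simpa using this
      have hd := tree_dist_getVert hT (tpath hT w r) (tpath_isPath hT w r)
        (i := 1) (by omega)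
      rw [← hσ] at hd
      have hdσr : G.dist σ r = j - 1 := by
        have := hd.2; omega
      have hdσs : G.dist σ s = j := by
        have htri : G.dist σ s ≤ G.dist σ r + G.dist r s := hT.isConnected.dist_triangle
        rcases dist_nbr_cases hT h1 s with h | h <;> omega
      refine ⟨σ, h1, by omega, ?_, ?_⟩
      · rw [mem_Lvl]; omega
      · intro z hz hne
        rcases dist_nbr_cases hT hz r with h | h
        · omega
        · exfalso
          exact hne (parent_unique hT r hz h1 (by omega) (by omega))
  have hset : (G.neighborFinset w) ∩ Lvl G r s (j + 1) = (G.neighborFinset w).erase σ := by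
    ext z
    simp only [Finset.mem_inter, Finset.mem_erase, SimpleGraph.mem_neighborFinset]
    constructor
    · rintro ⟨h1, h2⟩
      exact ⟨fun h => hσnot (h ▸ h2), h1⟩
    · rintro ⟨hne, hz⟩
      refine ⟨hz, ?_⟩
      rw [mem_Lvl]
      have hzr : G.dist z r = j + 1 := hσkey z hz hne
      have hzs : G.dist z s = j + 2 := by
        rcases dist_nbr_cases hT hz s with h | h
        · omega
        · exact absurd (parent_unique hT s hz hσadj (by omega) (by omega)) hne
      exact ⟨hzr, hzs⟩
  rw [hset, Finset.card_erase_of_mem (by rwa [SimpleGraph.mem_neighborFinset]),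
    SimpleGraph.card_neighborFinset_eq_degree, hdeg]
  omega

lemma Lvl_succ_card (hT : G.IsTree) {m : ℕ} {r s : W} (hrs : G.Adj r s) {j : ℕ}
    (hint : ∀ w ∈ Lvl G r s j, G.degree w = m + 1) :
    (Lvl G r s (j + 1)).card = m * (Lvl G r s j).card := by
  have hcover : Lvl G r s (j + 1) =
      (Lvl G r s j).biUnion (fun w => (G.neighborFinset w) ∩ Lvl G r s (j + 1)) := by
    ext z
    simp only [Finset.mem_biUnion, Finset.mem_inter, SimpleGraph.mem_neighborFinset]
    constructor
    · intro hz
      have hz' := mem_Lvl.mp hz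
      have hne : z ≠ r := by
        intro h
        rw [h] at hz'
        have : G.dist r r = 0 := SimpleGraph.dist_self
        omega
      have hlen : (tpath hT z r).length = j + 1 := by rw [tpath_length]; exact hz'.1
      set π := (tpath hT z r).getVert 1 with hπ
      have hadj : G.Adj z π := by
        have := (tpath hT z r).adj_getVert_succ (i := 0) (by omega)
        simpa using this
      have hd := tree_dist_getVert hT (tpath hT z r) (tpath_isPath hT z r) (i := 1) (by omega)
      rw [← hπ] at hd
      have hπr : G.dist π r = j := by have := hd.2; omega
      have hπs : G.dist π s = j + 1 := by
        have hd_rs : G.dist r s = 1 := SimpleGraph.dist_eq_one_iff_adj.mpr hrs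
        have htri : G.dist π s ≤ G.dist π r + G.dist r s := hT.isConnected.dist_triangle
        rcases dist_nbr_cases hT hadj.symm s with h | h <;> omega
      exact ⟨π, mem_Lvl.mpr ⟨hπr, hπs⟩, hadj.symm, hz⟩
    · rintro ⟨w, _, h⟩
      exact h.2
  rw [hcover, Finset.card_biUnion, Finset.sum_congr rfl
    (fun w hw => children_card hT hrs hw (hint w hw)), Finset.sum_const, smul_eq_mul,
    Nat.mul_comm]
  · intro w hw w' hw' hne
    rw [Function.onFun, Finset.disjoint_left]
    rintro z hz hz'
    simp only [Finset.mem_inter, SimpleGraph.mem_neighborFinset] at hz hz'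
    have h1 := (mem_Lvl.mp hw).1
    have h2 := (mem_Lvl.mp hw').1
    have h3 := (mem_Lvl.mp hz.2).1
    exact hne (parent_unique hT r hz.1.symm hz'.1.symm (by omega) (by omega))

lemma Lvl_card (hT : G.IsTree) {m k : ℕ} {r s : W} (hrs : G.Adj r s)
    (hint : ∀ j' : ℕ, j' < k → ∀ w ∈ Lvl G r s j', G.degree w = m + 1) :
    ∀ j : ℕ, j ≤ k → (Lvl G r s j).card = m ^ j := by
  intro j
  induction j with
  | zero => intro _; rw [Lvl_zero hT hrs]; simp
  | succ n ih =>
    intro hn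
    rw [Lvl_succ_card hT hrs (hint n (by omega)), ih (by omega), pow_succ, Nat.mul_comm]

end Levels

section Perfect
variable {W : Type} [Fintype W] [DecidableEq W] {G : SimpleGraph W} [DecidableRel G.Adj]
variable {m D k : ℕ} {x : W}

/-- In a perfect tree, if `x` is on the `p`-side of edge `pq` and the `q`-side contains a
vertex at depth `k`, then both sides have exactly `m ^ k` vertices at depth `k`. -/
lemma branch_card (hT : G.IsTree) (hm : 2 ≤ m)
    (hdeg : ∀ v : W, G.degree v = 1 ∨ G.degree v = m + 1)
    (hdle : ∀ u v : W, G.dist u v ≤ D)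
    (hleaf : ∀ v : W, G.degree v = 1 → ∃ u : W, G.dist u v = D)
    (hDk : 2 * k + 1 ≤ D) (hx : ∀ z : W, G.dist x z ≤ D - k)
    {p q : W} (hpq : G.Adj p q) (hxp : G.dist x p < G.dist x q)
    (hne : (Lvl G q p k).Nonempty) :
    (Lvl G q p k).card = m ^ k ∧ (Lvl G p q k).card = m ^ k := by
  obtain ⟨v₀, hv₀⟩ := hne
  rw [mem_Lvl] at hv₀
  have h1 : ∀ z : W, G.dist z q < G.dist z p → G.dist q z + k + 1 ≤ D := by
    intro z hz
    have := crossing_dist hT hpq hxp hz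
    have := hx z
    omega
  have h2 : ∀ z : W, G.dist z p < G.dist z q → G.dist p z + k + 1 ≤ D := by
    intro z hz
    have hcr := crossing_dist hT hpq hz (by omega : G.dist v₀ q < G.dist v₀ p)
    have := hdle z v₀
    have e1 : G.dist q v₀ = G.dist v₀ q := SimpleGraph.dist_comm
    have e2 : G.dist p z = G.dist z p := SimpleGraph.dist_comm
    omega
  -- every leaf on the q-side has depth ≥ k, every leaf on the p-side has depth ≥ k
  have hleafq : ∀ w : W, G.degree w = 1 → G.dist w q < G.dist w p → k ≤ G.dist w q := by
    intro w hw hside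
    obtain ⟨z, hz⟩ := hleaf w hw
    have e3 : G.dist z w = G.dist w z := SimpleGraph.dist_comm
    have e4 : G.dist p w = G.dist w p := SimpleGraph.dist_comm
    have e5 : G.dist q w = G.dist w q := SimpleGraph.dist_comm
    rcases Nat.lt_or_ge (G.dist z q) (G.dist z p) with hzs | hzs
    · have htri : G.dist z w ≤ G.dist z q + G.dist q w := hT.isConnected.dist_triangle
      have := h1 z hzs
      have e1 : G.dist z q = G.dist q z := SimpleGraph.dist_comm
      have e2 : G.dist q w = G.dist w q := SimpleGraph.dist_comm
      omega
    · have hzs' : G.dist z p < G.dist z q := by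
        have := adj_dist_ne hT hpq z
        omega
      have hcr := crossing_dist hT hpq hzs' (hside)
      have := h2 z hzs'
      have e1 : G.dist z p = G.dist p z := SimpleGraph.dist_comm
      have e2 : G.dist q w = G.dist w q := SimpleGraph.dist_comm
      omega
  have hleafp : ∀ w : W, G.degree w = 1 → G.dist w p < G.dist w q → k ≤ G.dist w p := by
    intro w hw hside
    obtain ⟨z, hz⟩ := hleaf w hw
    have e3 : G.dist z w = G.dist w z := SimpleGraph.dist_comm
    have e4 : G.dist p w = G.dist w p := SimpleGraph.dist_comm
    have e5 : G.dist q w = G.dist w q := SimpleGraph.dist_comm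
    rcases Nat.lt_or_ge (G.dist z p) (G.dist z q) with hzs | hzs
    · have htri : G.dist z w ≤ G.dist z p + G.dist p w := hT.isConnected.dist_triangle
      have := h2 z hzs
      have e1 : G.dist z p = G.dist p z := SimpleGraph.dist_comm
      have e2 : G.dist p w = G.dist w p := SimpleGraph.dist_comm
      omega
    · have hzs' : G.dist z q < G.dist z p := by
        have := adj_dist_ne hT hpq z
        omega
      have hcr := crossing_dist hT hpq hside hzs'
      have := h1 z hzs'
      have e1 : G.dist z q = G.dist q z := SimpleGraph.dist_comm
      have e2 : G.dist q z = G.dist z q := SimpleGraph.dist_comm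
      have := hdle w z
      omega
  constructor
  · refine Lvl_card hT hpq.symm ?_ k le_rfl
    intro j' hj' w hw
    rw [mem_Lvl] at hw
    rcases hdeg w with h | h
    · have := hleafq w h (by omega)
      omega
    · exact h
  · refine Lvl_card hT hpq ?_ k le_rfl
    intro j' hj' w hw
    rw [mem_Lvl] at hw
    rcases hdeg w with h | h
    · have := hleafp w h (by omega)
      omega
    · exact h

end Perfect

section Sums
variable {W : Type} [Fintype W] [DecidableEq W] {G : SimpleGraph W} [DecidableRel G.Adj]
variable {m D k : ℕ} {x : W}

/-- ordered pairs at distance `2k+1` decompose over directed middle edges -/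
lemma pairs_eq_biUnion (hT : G.IsTree) (k : ℕ) :
    (univ.filter fun e : W × W => G.dist e.1 e.2 = 2 * k + 1) =
      (univ.filter fun e : W × W => G.Adj e.1 e.2).biUnion
        (fun e => (Lvl G e.1 e.2 k) ×ˢ (Lvl G e.2 e.1 k)) := by
  ext ⟨u, v⟩
  simp only [Finset.mem_filter, Finset.mem_biUnion, Finset.mem_univ, true_and,
    Finset.mem_product, mem_Lvl]
  constructor
  · intro huv
    obtain ⟨p, q, hpq, d1, d2, d3, d4⟩ := middle_edge_exists hT huv
    have e1 : G.dist v q = G.dist q v := SimpleGraph.dist_comm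
    have e2 : G.dist v p = G.dist p v := SimpleGraph.dist_comm
    exact ⟨(p, q), hpq, ⟨d1, d2⟩, ⟨d3, d4⟩⟩
  · rintro ⟨e, hpq, ⟨d1, d2⟩, ⟨d3, d4⟩⟩
    have := crossing_dist hT hpq (by omega : G.dist u e.1 < G.dist u e.2)
      (by omega : G.dist v e.2 < G.dist v e.1)
    have e1 : G.dist e.2 v = G.dist v e.2 := SimpleGraph.dist_comm
    omega

lemma pairs_card_eq_sum (hT : G.IsTree) (k : ℕ) :
    (univ.filter fun e : W × W => G.dist e.1 e.2 = 2 * k + 1).card =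
      ∑ e ∈ (univ.filter fun e : W × W => G.Adj e.1 e.2),
        (Lvl G e.1 e.2 k).card * (Lvl G e.2 e.1 k).card := by
  rw [pairs_eq_biUnion hT k, Finset.card_biUnion]
  · exact Finset.sum_congr rfl fun e _ => Finset.card_product _ _
  · rintro ⟨p, q⟩ hpq ⟨p', q'⟩ hpq' hne
    simp only [Finset.coe_filter, Set.mem_setOf_eq, Finset.mem_univ, true_and] at hpq hpq'
    rw [Function.onFun, Finset.disjoint_left]
    rintro ⟨u, v⟩ huv huv'
    simp only [Finset.mem_product, mem_Lvl] at huv huv'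
    have e1 : G.dist v q = G.dist q v := SimpleGraph.dist_comm
    have e2 : G.dist v p = G.dist p v := SimpleGraph.dist_comm
    have e3 : G.dist v q' = G.dist q' v := SimpleGraph.dist_comm
    have e4 : G.dist v p' = G.dist p' v := SimpleGraph.dist_comm
    obtain ⟨h1, h2⟩ := middle_edge_unique hT hpq hpq' huv.1.1 huv.1.2 huv.2.1 huv.2.2
      huv'.1.1 huv'.1.2 huv'.2.1 huv'.2.2
    exact hne (by rw [Prod.ext_iff]; exact ⟨h1, h2⟩)

/-- vertices at distance `> k` from `x` decompose over directed edges pointing away from `x` -/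
lemma far_eq_biUnion (hT : G.IsTree) (k : ℕ) (x : W) :
    (univ.filter fun v : W => k < G.dist x v) =
      ((univ.filter fun e : W × W => G.Adj e.1 e.2 ∧ G.dist x e.1 < G.dist x e.2)).biUnion
        (fun e => Lvl G e.2 e.1 k) := by
  ext v
  simp only [Finset.mem_filter, Finset.mem_biUnion, Finset.mem_univ, true_and, mem_Lvl]
  constructor
  · intro hv
    set n := G.dist x v with hn
    set P := tpath hT x v with hP
    have hlen : P.length = n := tpath_length hT x v
    have hd1 := tree_dist_getVert hT P (tpath_isPath hT x v) (i := n - k - 1) (by omega)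
    have hd2 := tree_dist_getVert hT P (tpath_isPath hT x v) (i := n - k) (by omega)
    have hadj : G.Adj (P.getVert (n - k - 1)) (P.getVert (n - k)) := by
      have := P.adj_getVert_succ (i := n - k - 1) (by omega)
      have hnk : n - k - 1 + 1 = n - k := by omega
      rwa [hnk] at this
    have hlt : G.dist x (P.getVert (n - k - 1)) < G.dist x (P.getVert (n - k)) := by omega
    have hA : G.dist v (P.getVert (n - k)) = k := by
      have e : G.dist v (P.getVert (n - k)) = G.dist (P.getVert (n - k)) v :=
        SimpleGraph.dist_comm
      omega
    have hB : G.dist v (P.getVert (n - k - 1)) = k + 1 := by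
      have e : G.dist v (P.getVert (n - k - 1)) = G.dist (P.getVert (n - k - 1)) v :=
        SimpleGraph.dist_comm
      omega
    exact ⟨(P.getVert (n - k - 1), P.getVert (n - k)), ⟨hadj, hlt⟩, hA, hB⟩
  · rintro ⟨e, ⟨hpq, hxpq⟩, h1, h2⟩
    have := crossing_dist hT hpq hxpq (by omega : G.dist v e.2 < G.dist v e.1)
    have e1 : G.dist e.2 v = G.dist v e.2 := SimpleGraph.dist_comm
    omega

lemma far_card_eq_sum (hT : G.IsTree) (k : ℕ) (x : W) :
    (univ.filter fun v : W => k < G.dist x v).card =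
      ∑ e ∈ (univ.filter fun e : W × W => G.Adj e.1 e.2 ∧ G.dist x e.1 < G.dist x e.2),
        (Lvl G e.2 e.1 k).card := by
  rw [far_eq_biUnion hT k x, Finset.card_biUnion]
  intro e he e' he' hne
  simp only [Finset.coe_filter, Set.mem_setOf_eq, Finset.mem_univ, true_and] at he he'
  rw [Function.onFun, Finset.disjoint_left]
  intro v hv hv'
  rw [mem_Lvl] at hv hv'
  have hcross := crossing_dist hT he.1 he.2 (by omega : G.dist v e.2 < G.dist v e.1)
  have hcross' := crossing_dist hT he'.1 he'.2 (by omega : G.dist v e'.2 < G.dist v e'.1)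
  have g := crossing_getVert hT he.1 he.2 (by omega : G.dist v e.2 < G.dist v e.1)
  have g' := crossing_getVert hT he'.1 he'.2 (by omega : G.dist v e'.2 < G.dist v e'.1)
  have e1 : G.dist e.2 v = G.dist v e.2 := SimpleGraph.dist_comm
  have e1' : G.dist e'.2 v = G.dist v e'.2 := SimpleGraph.dist_comm
  have hpp : G.dist x e.1 = G.dist x e'.1 := by omega
  rw [hpp] at g
  exact hne (Prod.ext_iff.mpr ⟨g.1.symm.trans g'.1, g.2.symm.trans g'.2⟩)

end Sums

section Master
variable {W : Type} [Fintype W] [DecidableEq W] {G : SimpleGraph W} [DecidableRel G.Adj]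
variable {m D k : ℕ} {x : W}

lemma master_count (hT : G.IsTree) (hm : 2 ≤ m)
    (hdeg : ∀ v : W, G.degree v = 1 ∨ G.degree v = m + 1)
    (hdle : ∀ u v : W, G.dist u v ≤ D)
    (hleaf : ∀ v : W, G.degree v = 1 → ∃ u : W, G.dist u v = D)
    (hDk : 2 * k + 1 ≤ D) (hx : ∀ z : W, G.dist x z ≤ D - k) :
    (univ.filter fun e : W × W => G.dist e.1 e.2 = 2 * k + 1).card =
      2 * (m ^ k * (univ.filter fun v : W => k < G.dist x v).card) := by
  classical
  set S : Finset (W × W) := univ.filter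
    (fun e : W × W => G.Adj e.1 e.2 ∧ (Lvl G e.1 e.2 k).Nonempty ∧ (Lvl G e.2 e.1 k).Nonempty)
    with hS
  have hSmem : ∀ e : W × W, e ∈ S ↔
      G.Adj e.1 e.2 ∧ (Lvl G e.1 e.2 k).Nonempty ∧ (Lvl G e.2 e.1 k).Nonempty := by
    intro e; simp [hS]
  have hScard : ∀ e ∈ S, (Lvl G e.1 e.2 k).card = m ^ k ∧ (Lvl G e.2 e.1 k).card = m ^ k := by
    intro e he
    rw [hSmem] at he
    obtain ⟨hadj, hne1, hne2⟩ := he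
    rcases Nat.lt_or_ge (G.dist x e.1) (G.dist x e.2) with hside | hside
    · have := branch_card hT hm hdeg hdle hleaf hDk hx hadj hside hne2
      exact ⟨this.2, this.1⟩
    · have hside' : G.dist x e.2 < G.dist x e.1 := by
        have := adj_dist_ne hT hadj x
        omega
      exact branch_card hT hm hdeg hdle hleaf hDk hx hadj.symm hside' hne1
  set Sx : Finset (W × W) := S.filter (fun e => G.dist x e.1 < G.dist x e.2) with hSx
  -- Step A : pairs
  have stepA : (univ.filter fun e : W × W => G.dist e.1 e.2 = 2 * k + 1).card =
      (m ^ k * m ^ k) * S.card := by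
    rw [pairs_card_eq_sum hT k]
    rw [← Finset.sum_subset (s₁ := S) ?_ ?_]
    · rw [Finset.sum_congr rfl (fun e he => by rw [(hScard e he).1, (hScard e he).2]),
        Finset.sum_const, smul_eq_mul, Nat.mul_comm]
    · intro e he
      rw [hSmem] at he
      simp only [Finset.mem_filter, Finset.mem_univ, true_and]
      exact he.1
    · intro e he hnotS
      simp only [Finset.mem_filter, Finset.mem_univ, true_and] at he
      rw [hSmem] at hnotS
      push_neg at hnotS
      rcases (Finset.eq_empty_or_nonempty (Lvl G e.1 e.2 k)) with h | h
      · rw [h]; simp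
      rcases (Finset.eq_empty_or_nonempty (Lvl G e.2 e.1 k)) with h2 | h2
      · rw [h2]; simp
      exact absurd (hnotS he h) h2.ne_empty
  -- Step B : far vertices
  have stepB : (univ.filter fun v : W => k < G.dist x v).card = m ^ k * Sx.card := by
    rw [far_card_eq_sum hT k x]
    rw [← Finset.sum_subset (s₁ := Sx) ?_ ?_]
    · rw [Finset.sum_congr rfl (fun e he => (hScard e (Finset.mem_of_mem_filter e he)).2),
        Finset.sum_const, smul_eq_mul, Nat.mul_comm]
    · intro e he
      rw [hSx, Finset.mem_filter] at he
      obtain ⟨heS, hside⟩ := he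
      rw [hSmem] at heS
      simp only [Finset.mem_filter, Finset.mem_univ, true_and]
      exact ⟨heS.1, hside⟩
    · intro e he hnot
      simp only [Finset.mem_filter, Finset.mem_univ, true_and] at he
      rcases (Finset.eq_empty_or_nonempty (Lvl G e.2 e.1 k)) with h | h
      · rw [h]; simp
      exfalso
      have hcards := branch_card hT hm hdeg hdle hleaf hDk hx he.1 he.2 h
      have hpk : 0 < m ^ k := Nat.pow_pos (by omega)
      apply hnot
      rw [hSx, Finset.mem_filter, hSmem]
      exact ⟨⟨he.1, Finset.card_pos.mp (by omega), h⟩, he.2⟩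
  -- Step C : S.card = 2 * Sx.card
  have stepC : S.card = 2 * Sx.card := by
    have hsplit := Finset.card_filter_add_card_filter_not
      (s := S) (p := fun e : W × W => G.dist x e.1 < G.dist x e.2)
    have himage : S.filter (fun e : W × W => ¬ G.dist x e.1 < G.dist x e.2) =
        Sx.image Prod.swap := by
      ext e
      simp only [Finset.mem_image, Finset.mem_filter, hSx]
      constructor
      · rintro ⟨heS, hnlt⟩
        rw [hSmem] at heS
        refine ⟨e.swap, ⟨?_, ?_⟩, Prod.swap_swap e⟩
        · rw [hSmem]
          exact ⟨heS.1.symm, heS.2.2, heS.2.1⟩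
        · have := adj_dist_ne hT heS.1 x
          simp only [Prod.fst_swap, Prod.snd_swap]
          omega
      · rintro ⟨a, ⟨haS, halt⟩, rfl⟩
        rw [hSmem] at haS
        constructor
        · rw [hSmem]
          exact ⟨haS.1.symm, haS.2.2, haS.2.1⟩
        · simp only [Prod.fst_swap, Prod.snd_swap]
          omega
    rw [himage, Finset.card_image_of_injective _ Prod.swap_injective] at hsplit
    rw [hSx] at hsplit ⊢
    omega
  rw [stepA, stepB, stepC]
  ring
end Master

section Sym2Count
variable {W : Type} [Fintype W] [DecidableEq W] (G : SimpleGraph W)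

lemma two_mul_pathCount (t : ℕ) (ht : t ≠ 0) :
    (univ.filter fun e : W × W => G.dist e.1 e.2 = t).card = 2 * pathCount G t := by
  classical
  set PC := (Finset.univ.filter fun p : Sym2 W => ∃ u v : W, p = s(u, v) ∧ G.dist u v = t)
    with hPC
  have hmap : ∀ e ∈ (univ.filter fun e : W × W => G.dist e.1 e.2 = t),
      s(e.1, e.2) ∈ PC := by
    intro e he
    simp only [Finset.mem_filter, Finset.mem_univ, true_and] at he
    rw [hPC]
    simp only [Finset.mem_filter, Finset.mem_univ, true_and]
    exact ⟨e.1, e.2, rfl, he⟩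
  rw [Finset.card_eq_sum_card_fiberwise hmap]
  have hfib : ∀ z ∈ PC,
      ((univ.filter fun e : W × W => G.dist e.1 e.2 = t).filter
        (fun e => s(e.1, e.2) = z)).card = 2 := by
    intro z hz
    rw [hPC] at hz
    simp only [Finset.mem_filter, Finset.mem_univ, true_and] at hz
    obtain ⟨u, v, rfl, hd⟩ := hz
    have huv : u ≠ v := by
      intro h
      rw [h, SimpleGraph.dist_self] at hd
      exact ht hd.symm
    have hset : ((univ.filter fun e : W × W => G.dist e.1 e.2 = t).filter
        (fun e => s(e.1, e.2) = s(u, v))) = {(u, v), (v, u)} := by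
      ext e
      simp only [Finset.mem_filter, Finset.mem_univ, true_and, Finset.mem_insert,
        Finset.mem_singleton, Sym2.eq_iff]
      constructor
      · rintro ⟨hde, (⟨h1, h2⟩ | ⟨h1, h2⟩)⟩
        · left; exact Prod.ext_iff.mpr ⟨h1, h2⟩
        · right; exact Prod.ext_iff.mpr ⟨h1, h2⟩
      · rintro (rfl | rfl)
        · exact ⟨hd, Or.inl ⟨rfl, rfl⟩⟩
        · have : G.dist v u = G.dist u v := SimpleGraph.dist_comm
          exact ⟨this.trans hd, Or.inr ⟨rfl, rfl⟩⟩
    rw [hset, Finset.card_insert_of_notMem (by simp [Prod.ext_iff, huv]), Finset.card_singleton]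
  rw [Finset.sum_congr rfl hfib, Finset.sum_const, smul_eq_mul, Nat.mul_comm]
  rfl

end Sym2Count

section Ball
variable {W : Type} [Fintype W] [DecidableEq W] {G : SimpleGraph W} [DecidableRel G.Adj]
variable {m D k : ℕ} {x : W}

lemma lift_walk {s : Set W} : ∀ {u v : W} (p : G.Walk u v) (_ : ∀ w ∈ p.support, w ∈ s)
    (hu : u ∈ s) (hv : v ∈ s), ∃ q : (G.induce s).Walk ⟨u, hu⟩ ⟨v, hv⟩, q.length = p.length := by
  intro u v p
  induction p with
  | nil => intro _ hu _; exact ⟨Walk.nil, rfl⟩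
  | @cons a b c hab p ih =>
    intro hs hu hv
    have hb : b ∈ s := hs b (by simp [Walk.support_cons])
    obtain ⟨q, hq⟩ := ih (fun w hw => hs w (by simp [Walk.support_cons, hw])) hb hv
    refine ⟨Walk.cons (by simpa using hab) q, by simp [hq]⟩

lemma ball_convex (hT : G.IsTree) (x : W) (k : ℕ) {u v : W}
    (hu : G.dist x u ≤ k) (hv : G.dist x v ≤ k) :
    ∀ w ∈ (tpath hT u v).support, G.dist x w ≤ k := by
  intro w hw
  rcases mem_path_cases hT hw x with h | h
  · have := tree_dist_split hT (tpath_isPath hT x u) h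
    omega
  · have := tree_dist_split hT (tpath_isPath hT x v) h
    omega

lemma induce_dist (hT : G.IsTree) (x : W) (k : ℕ) {u v : W}
    (hu : u ∈ {w : W | G.dist x w ≤ k}) (hv : v ∈ {w : W | G.dist x w ≤ k}) :
    (G.induce {w : W | G.dist x w ≤ k}).dist ⟨u, hu⟩ ⟨v, hv⟩ = G.dist u v := by
  obtain ⟨q, hq⟩ := lift_walk (s := {w : W | G.dist x w ≤ k}) (tpath hT u v)
    (ball_convex hT x k hu hv) hu hv
  apply le_antisymm
  · have := SimpleGraph.dist_le q
    rw [hq, tpath_length] at this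
    exact this
  · have hreach : (G.induce {w : W | G.dist x w ≤ k}).Reachable ⟨u, hu⟩ ⟨v, hv⟩ := ⟨q⟩
    obtain ⟨r, hr⟩ := hreach.exists_walk_length_eq_dist
    have : G.dist u v ≤ (r.map (SimpleGraph.Embedding.induce _).toHom).length :=
      SimpleGraph.dist_le _
    rwa [Walk.length_map, hr] at this

lemma induce_ball_isTree (hT : G.IsTree) (x : W) (k : ℕ) :
    (G.induce {w : W | G.dist x w ≤ k}).IsTree := by
  constructor
  · rw [SimpleGraph.connected_iff]
    refine ⟨?_, ⟨⟨x, by simp [SimpleGraph.dist_self]⟩⟩⟩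
    intro a b
    obtain ⟨q, _⟩ := lift_walk (s := {w : W | G.dist x w ≤ k}) (tpath hT a b)
      (ball_convex hT x k a.2 b.2) a.2 b.2
    exact ⟨q⟩
  · intro a c hc
    have hinj : Function.Injective (SimpleGraph.Embedding.induce
        {w : W | G.dist x w ≤ k} (G := G)).toHom := Subtype.coe_injective
    exact hT.IsAcyclic _ ((Walk.map_isCycle_iff_of_injective hinj).mpr hc)

lemma induce_ball_degree_interior (hT : G.IsTree) {x v : W} {k : ℕ}
    [DecidableRel (G.induce {w : W | G.dist x w ≤ k}).Adj]
    (hv : G.dist x v < k) (hmem : v ∈ {w : W | G.dist x w ≤ k}) :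
    (G.induce {w : W | G.dist x w ≤ k}).degree ⟨v, hmem⟩ = G.degree v := by
  rw [← SimpleGraph.card_neighborFinset_eq_degree, ← SimpleGraph.card_neighborFinset_eq_degree]
  have hmem : ∀ z ∈ G.neighborFinset v, z ∈ {w : W | G.dist x w ≤ k} := by
    intro z hz
    simp only [SimpleGraph.mem_neighborFinset] at hz
    have h1 : G.dist x z ≤ G.dist x v + G.dist v z := hT.isConnected.dist_triangle
    have h2 : G.dist v z = 1 := SimpleGraph.dist_eq_one_iff_adj.mpr hz
    simp only [Set.mem_setOf_eq]
    omega
  refine Finset.card_bij' (fun b _ => (b : W)) (fun z hz => ⟨z, hmem z hz⟩) ?_ ?_ ?_ ?_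
  · intro b hb
    simp only [SimpleGraph.mem_neighborFinset] at hb ⊢
    exact hb
  · intro z hz
    simp only [SimpleGraph.mem_neighborFinset] at hz ⊢
    exact hz
  · intro b _; rfl
  · intro z _; rfl

lemma induce_ball_degree_boundary (hT : G.IsTree) {x v : W} {k : ℕ}
    [DecidableRel (G.induce {w : W | G.dist x w ≤ k}).Adj] (hk : 1 ≤ k)
    (hv : G.dist x v = k) (hmem : v ∈ {w : W | G.dist x w ≤ k}) :
    (G.induce {w : W | G.dist x w ≤ k}).degree ⟨v, hmem⟩ = 1 := by
  have hvx : G.dist v x = k := SimpleGraph.dist_comm.trans hv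
  have hlen : (tpath hT v x).length = k := by rw [tpath_length, hvx]
  set π := (tpath hT v x).getVert 1 with hπ
  have hadj : G.Adj v π := by
    have := (tpath hT v x).adj_getVert_succ (i := 0) (by omega)
    simpa using this
  have hd := tree_dist_getVert hT (tpath hT v x) (tpath_isPath hT v x) (i := 1) (by omega)
  rw [← hπ] at hd
  have hπx : G.dist x π ≤ k := by
    have : G.dist x π = G.dist π x := SimpleGraph.dist_comm
    omega
  rw [← SimpleGraph.card_neighborFinset_eq_degree]
  have hset : (G.induce {w : W | G.dist x w ≤ k}).neighborFinset ⟨v, le_of_eq hv⟩ =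
      {⟨π, hπx⟩} := by
    ext b
    simp only [SimpleGraph.mem_neighborFinset, Finset.mem_singleton]
    constructor
    · intro hb
      have hbadj : G.Adj v (b : W) := by simpa using hb
      have hbmem : G.dist x (b : W) ≤ k := b.2
      have hcases := dist_nbr_cases hT hbadj x
      have e1 : G.dist (b : W) x = G.dist x (b : W) := SimpleGraph.dist_comm
      have e2 : G.dist π x = k - 1 := by omega
      have hbx : G.dist (b : W) x + 1 = G.dist v x := by omega
      have : (b : W) = π := parent_unique hT x hbadj hadj hbx (by omega)
      exact Subtype.ext this
    · rintro rfl
      simpa using hadj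
  rw [hset, Finset.card_singleton]

lemma not_leaf_interior (hT : G.IsTree) (hm : 2 ≤ m)
    (hdeg : ∀ v : W, G.degree v = 1 ∨ G.degree v = m + 1)
    (hleaf : ∀ v : W, G.degree v = 1 → ∃ u : W, G.dist u v = D)
    (hx : ∀ z : W, G.dist x z ≤ D - k) (hkD : 2 * k + 1 ≤ D)
    {v : W} (hv : G.dist x v < k) : G.degree v = m + 1 := by
  rcases hdeg v with h | h
  · exfalso
    obtain ⟨z, hz⟩ := hleaf v h
    have h1 : G.dist z v ≤ G.dist z x + G.dist x v := hT.isConnected.dist_triangle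
    have h2 : G.dist z x = G.dist x z := SimpleGraph.dist_comm
    have := hx z
    omega
  · exact h

lemma exists_deep (hT : G.IsTree) (hm : 2 ≤ m)
    (hdeg : ∀ v : W, G.degree v = 1 ∨ G.degree v = m + 1)
    (hleaf : ∀ v : W, G.degree v = 1 → ∃ u : W, G.dist u v = D)
    (hx : ∀ z : W, G.dist x z ≤ D - k) (hkD : 2 * k + 1 ≤ D) (hk : 1 ≤ k)
    {y : W} (hy : G.Adj x y) :
    ∃ v : W, G.dist v y = k - 1 ∧ G.dist v x = k := by
  have hcard : (Lvl G y x (k - 1)).card = m ^ (k - 1) := by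
    refine Lvl_card hT hy.symm ?_ (k - 1) le_rfl
    intro j' hj' w hw
    rw [mem_Lvl] at hw
    have : G.dist x w < k := by
      have : G.dist x w = G.dist w x := SimpleGraph.dist_comm
      omega
    exact not_leaf_interior hT hm hdeg hleaf hx hkD this
  have hpos : 0 < (Lvl G y x (k - 1)).card := by
    rw [hcard]; exact Nat.pow_pos (by omega)
  obtain ⟨v, hv⟩ := Finset.card_pos.mp hpos
  rw [mem_Lvl] at hv
  exact ⟨v, hv.1, by omega⟩

lemma separation (hT : G.IsTree) (hk : 1 ≤ k) {y₁ y₂ a b : W}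
    (hy₁ : G.Adj x y₁) (hy₂ : G.Adj x y₂) (hne : y₁ ≠ y₂)
    (ha : G.dist a y₁ = k - 1) (hax : G.dist a x = k)
    (hb : G.dist b y₂ = k - 1) (hbx : G.dist b x = k) :
    G.dist a b = 2 * k := by
  have hxy₁ : G.dist x y₁ = 1 := SimpleGraph.dist_eq_one_iff_adj.mpr hy₁
  have hxy₂ : G.dist x y₂ = 1 := SimpleGraph.dist_eq_one_iff_adj.mpr hy₂
  have hxx : G.dist x x = 0 := SimpleGraph.dist_self
  have hby₁ : G.dist b y₁ = k + 1 := by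
    have hcases := adj_dist_cases hT (hy₁.symm : G.Adj y₁ x) b
    have e1 : G.dist b y₁ = G.dist y₁ b := SimpleGraph.dist_comm
    have e2 : G.dist b x = G.dist x b := SimpleGraph.dist_comm.symm
    rcases hcases with h | h
    · -- G.dist b x = G.dist b y₁ + 1 : b on the y₁ side, contradiction
      exfalso
      have hside₁ : G.dist b y₁ < G.dist b x := by
        have e3 : G.dist b y₁ = G.dist b y₁ := rfl
        omega
      have g₁ := crossing_getVert hT (hy₁.symm : G.Adj y₁ x) hside₁
        (by omega : G.dist x x < G.dist x y₁)
      have hside₂ : G.dist b y₂ < G.dist b x := by omega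
      have g₂ := crossing_getVert hT (hy₂.symm : G.Adj y₂ x) hside₂
        (by omega : G.dist x x < G.dist x y₂)
      have hbb : G.dist b y₁ = G.dist b y₂ := by omega
      rw [hbb] at g₁
      exact hne (g₁.1.symm.trans g₂.1)
    · omega
  have := crossing_dist hT (hy₁.symm : G.Adj y₁ x)
    (by omega : G.dist a y₁ < G.dist a x) (by omega : G.dist b x < G.dist b y₁)
  have e : G.dist x b = G.dist b x := SimpleGraph.dist_comm
  omega

end Ball

section Final
variable {W : Type} [Fintype W] [DecidableEq W] {G : SimpleGraph W} [DecidableRel G.Adj]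
variable {m D k : ℕ} {x : W}

lemma exists_center (hT : G.IsTree) (hdle : ∀ u v : W, G.dist u v ≤ D)
    (hab : ∃ a b : W, G.dist a b = D) (hkD : 2 * k + 1 ≤ D) :
    ∃ x : W, ∀ z : W, G.dist x z ≤ D - k := by
  obtain ⟨a, b, hab⟩ := hab
  set c := (D + 1) / 2 with hc
  have hlen : (tpath hT a b).length = D := by rw [tpath_length, hab]
  have hcle : c ≤ (tpath hT a b).length := by omega
  set y := (tpath hT a b).getVert c with hy
  have hd := tree_dist_getVert hT (tpath hT a b) (tpath_isPath hT a b) hcle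
  rw [← hy] at hd
  have hmem : y ∈ (tpath hT a b).support :=
    Walk.mem_support_iff_exists_getVert.mpr ⟨c, hy.symm, hcle⟩
  refine ⟨y, fun z => ?_⟩
  have e0 : G.dist y z = G.dist z y := SimpleGraph.dist_comm
  have e1 : G.dist a y = G.dist y a := SimpleGraph.dist_comm
  rcases mem_path_cases hT hmem z with h | h
  · have := tree_dist_split hT (tpath_isPath hT z a) h
    have := hdle z a
    omega
  · have := tree_dist_split hT (tpath_isPath hT z b) h
    have := hdle z b
    omega

lemma ball_perfect (hT : G.IsTree) (hm : 2 ≤ m)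
    (hdeg : ∀ v : W, G.degree v = 1 ∨ G.degree v = m + 1)
    (hdle : ∀ u v : W, G.dist u v ≤ D)
    (hleaf : ∀ v : W, G.degree v = 1 → ∃ u : W, G.dist u v = D)
    (hkD : 2 * k + 1 ≤ D) (hx : ∀ z : W, G.dist x z ≤ D - k)
    [DecidableRel (G.induce {w : W | G.dist x w ≤ k}).Adj] :
    IsPerfectUnrootedMary m (2 * k) (G.induce {w : W | G.dist x w ≤ k}) := by
  have hxmem : x ∈ {w : W | G.dist x w ≤ k} := by simp [SimpleGraph.dist_self]
  refine ⟨induce_ball_isTree hT x k, ?_, ?_, ?_, ?_⟩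
  · -- degrees
    rintro h2k ⟨v, hv⟩
    have hv' : G.dist x v ≤ k := hv
    rcases Nat.lt_or_ge (G.dist x v) k with hlt | hge
    · right
      rw [induce_ball_degree_interior hT hlt hv]
      exact not_leaf_interior hT hm hdeg hleaf hx hkD hlt
    · left
      exact induce_ball_degree_boundary hT (by omega) (by omega) hv
  · -- diameter bound
    rintro ⟨u, hu⟩ ⟨v, hv⟩
    rw [induce_dist hT x k hu hv]
    have h1 : G.dist u v ≤ G.dist u x + G.dist x v := hT.isConnected.dist_triangle
    have e1 : G.dist u x = G.dist x u := SimpleGraph.dist_comm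
    have hu' : G.dist x u ≤ k := hu
    have hv' : G.dist x v ≤ k := hv
    omega
  · -- diameter attained
    rcases Nat.eq_zero_or_pos k with hk | hk
    · refine ⟨⟨x, hxmem⟩, ⟨x, hxmem⟩, ?_⟩
      rw [induce_dist hT x k hxmem hxmem, hk, SimpleGraph.dist_self]
    · have hxint : G.degree x = m + 1 := by
        rcases hdeg x with h | h
        · exfalso
          obtain ⟨z, hz⟩ := hleaf x h
          have := hx z
          have e : G.dist x z = G.dist z x := SimpleGraph.dist_comm
          omega
        · exact h
      have hcard2 : 1 < (G.neighborFinset x).card := by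
        rw [SimpleGraph.card_neighborFinset_eq_degree, hxint]; omega
      obtain ⟨y₁, hy₁m, y₂, hy₂m, hne⟩ := Finset.one_lt_card.mp hcard2
      rw [SimpleGraph.mem_neighborFinset] at hy₁m hy₂m
      obtain ⟨a, ha, hax⟩ := exists_deep hT hm hdeg hleaf hx hkD hk hy₁m
      obtain ⟨b, hb, hbx⟩ := exists_deep hT hm hdeg hleaf hx hkD hk hy₂m
      have hsep := separation hT hk hy₁m hy₂m hne ha hax hb hbx
      have hamem : a ∈ {w : W | G.dist x w ≤ k} := by
        have : G.dist x a = G.dist a x := SimpleGraph.dist_comm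
        simp only [Set.mem_setOf_eq]; omega
      have hbmem : b ∈ {w : W | G.dist x w ≤ k} := by
        have : G.dist x b = G.dist b x := SimpleGraph.dist_comm
        simp only [Set.mem_setOf_eq]; omega
      exact ⟨⟨a, hamem⟩, ⟨b, hbmem⟩, by rw [induce_dist hT x k hamem hbmem]; exact hsep⟩
  · -- perfectness
    rintro ⟨v, hv⟩ hdeg1
    have hv' : G.dist x v ≤ k := hv
    rcases Nat.eq_zero_or_pos k with hk | hk
    · exfalso
      have hpos : 0 < (G.induce {w : W | G.dist x w ≤ k}).degree ⟨v, hv⟩ := by omega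
      rw [← SimpleGraph.card_neighborFinset_eq_degree, Finset.card_pos] at hpos
      obtain ⟨b, hbm⟩ := hpos
      rw [SimpleGraph.mem_neighborFinset] at hbm
      have hadj : G.Adj v (b : W) := hbm
      have h1 : G.dist x v = 0 := by omega
      have h2 : G.dist x (b : W) = 0 := by have := b.2; simp only [Set.mem_setOf_eq] at this; omega
      have hv0 : x = v := (hT.isConnected.dist_eq_zero_iff).mp h1
      have hb0 : x = (b : W) := (hT.isConnected.dist_eq_zero_iff).mp h2
      rw [← hv0, ← hb0] at hadj
      exact G.irrefl hadj
    · have hvk : G.dist x v = k := by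
        by_contra hne
        have hlt : G.dist x v < k := by omega
        rw [induce_ball_degree_interior hT hlt hv] at hdeg1
        have := not_leaf_interior hT hm hdeg hleaf hx hkD hlt
        omega
      -- the first step from x towards v
      have hlenxv : (tpath hT x v).length = k := by rw [tpath_length, hvk]
      set y₁ := (tpath hT x v).getVert 1 with hy₁
      have hy₁adj : G.Adj x y₁ := by
        have := (tpath hT x v).adj_getVert_succ (i := 0) (by omega)
        simpa using this
      have hd := tree_dist_getVert hT (tpath hT x v) (tpath_isPath hT x v) (i := 1) (by omega)
      rw [← hy₁] at hd
      have hvy₁ : G.dist v y₁ = k - 1 := by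
        have : G.dist y₁ v = G.dist v y₁ := SimpleGraph.dist_comm
        omega
      have hvx : G.dist v x = k := SimpleGraph.dist_comm.trans hvk
      -- a second neighbour of x
      have hxint : G.degree x = m + 1 := by
        rcases hdeg x with h | h
        · exfalso
          obtain ⟨z, hz⟩ := hleaf x h
          have := hx z
          have e : G.dist x z = G.dist z x := SimpleGraph.dist_comm
          omega
        · exact h
      have hcard2 : 1 < (G.neighborFinset x).card := by
        rw [SimpleGraph.card_neighborFinset_eq_degree, hxint]; omega
      obtain ⟨y₂, hy₂m, hne⟩ := Finset.exists_mem_ne hcard2 y₁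
      rw [SimpleGraph.mem_neighborFinset] at hy₂m
      obtain ⟨b, hb, hbx⟩ := exists_deep hT hm hdeg hleaf hx hkD hk hy₂m
      have hsep := separation hT hk hy₁adj hy₂m (hne.symm) hvy₁ hvx hb hbx
      have hbmem : b ∈ {w : W | G.dist x w ≤ k} := by
        have : G.dist x b = G.dist b x := SimpleGraph.dist_comm
        simp only [Set.mem_setOf_eq]; omega
      refine ⟨⟨b, hbmem⟩, ?_⟩
      rw [induce_dist hT x k hbmem hv]
      have : G.dist b v = G.dist v b := SimpleGraph.dist_comm
      omega

end Final

theorem unrooted_path_count_odd (m D : ℕ) (hm : 2 ≤ m)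
    {W : Type} [Fintype W] [DecidableEq W] (G : SimpleGraph W) [DecidableRel G.Adj]
    (hG : IsPerfectUnrootedMary m D G)
    (Vf : ℕ → ℚ)
    (hVf : ∀ (d : ℕ) (X : Type) [Fintype X] (H : SimpleGraph X) [DecidableRel H.Adj],
      IsPerfectUnrootedMary m d H → (Fintype.card X : ℚ) = Vf d)
    (t : ℕ) (ht : Odd t) (ht1 : 1 ≤ t) (htD : t ≤ D) :
    (pathCount G t : ℚ) = (m : ℚ) ^ ((t - 1) / 2) * (Vf D - Vf (t - 1)) := by
  classical
  have hVfD : (Fintype.card W : ℚ) = Vf D := hVf D W G hG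
  obtain ⟨hT, hdeg0, hdle, hex, hleaf⟩ := hG
  obtain ⟨k, hk⟩ := ht
  have hkD : 2 * k + 1 ≤ D := by omega
  have hD0 : 0 < D := by omega
  have hdeg := hdeg0 hD0
  obtain ⟨x, hx⟩ := exists_center hT hdle hex hkD
  -- the counting identity
  have hmc := master_count hT hm hdeg hdle hleaf hkD hx
  have htwo := two_mul_pathCount G (2 * k + 1) (by omega)
  have hpc : pathCount G t = m ^ k * (univ.filter fun v : W => k < G.dist x v).card := by
    rw [hk]
    set Q := m ^ k * (univ.filter fun v : W => k < G.dist x v).card with hQ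
    omega
  -- the central ball is the perfect tree of diameter 2k
  haveI hdec : DecidableRel (G.induce {w : W | G.dist x w ≤ k}).Adj := Classical.decRel _
  have hperf : IsPerfectUnrootedMary m (2 * k) (G.induce {w : W | G.dist x w ≤ k}) :=
    ball_perfect hT hm hdeg hdle hleaf hkD hx
  have hVfball : (Fintype.card ↥{w : W | G.dist x w ≤ k} : ℚ) = Vf (2 * k) :=
    hVf (2 * k) ↥{w : W | G.dist x w ≤ k} (G.induce {w : W | G.dist x w ≤ k}) hperf
  have hballcard : Fintype.card ↥{w : W | G.dist x w ≤ k} =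
      (univ.filter fun v : W => G.dist x v ≤ k).card := by
    rw [← Set.toFinset_card, Set.toFinset_setOf]
  -- cardinality split
  have hsplit : (univ.filter fun v : W => G.dist x v ≤ k).card +
      (univ.filter fun v : W => k < G.dist x v).card = Fintype.card W := by
    have h := Finset.card_filter_add_card_filter_not
      (s := (univ : Finset W)) (p := fun v => G.dist x v ≤ k)
    simp only [not_le] at h
    rw [Finset.card_univ] at h
    exact h
  -- put everything together over ℚ
  have ht2 : t - 1 = 2 * k := by omega
  have ht3 : (t - 1) / 2 = k := by omega
  rw [ht3, ht2, ← hVfD, ← hVfball, hballcard, hpc]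
  have hfar : ((univ.filter fun v : W => k < G.dist x v).card : ℚ) =
      (Fintype.card W : ℚ) - ((univ.filter fun v : W => G.dist x v ≤ k).card : ℚ) := by
    have : ((univ.filter fun v : W => G.dist x v ≤ k).card : ℚ) +
        ((univ.filter fun v : W => k < G.dist x v).card : ℚ) = (Fintype.card W : ℚ) := by
      exact_mod_cast hsplit
    linarith
  push_cast
  rw [hfar]
end

section
/- Let m ≥ 2 and let T be the perfect rooted m-ary tree of depth r. If t is even and 1 ≤ t ≤ r, then the number of paths of length t in T equals (1/2)(m+1) · m^(t/2 − 1) · (V_R(r) − V_R(t/2 − 1)) − (t/2) · m^(t−1), where V_R(d) is the number of vertices in the perfect rooted m-ary tree of depth d. -/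
open SimpleGraph Finset

/-- `IsPerfectRootedMary m r H ρ` says that `H` is the perfect rooted `m`-ary tree of
depth `r` with root `ρ`: a tree whose root `ρ` has degree `m`, in which every other
vertex has degree `1` or `m + 1`, whose maximum distance from `ρ` to a vertex is `r`,
and in which every degree-`1` vertex is at distance exactly `r` from `ρ`.
(For `r = 0` the root-degree condition is dropped, so that the one-vertex tree is the
perfect rooted tree of depth `0`.) -/
def IsPerfectRootedMary (m r : ℕ) {W : Type} [Fintype W] (H : SimpleGraph W)
    [DecidableRel H.Adj] (ρ : W) : Prop :=
  H.IsTree ∧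
    (0 < r → H.degree ρ = m) ∧
    (∀ v : W, v ≠ ρ → H.degree v = 1 ∨ H.degree v = m + 1) ∧
    (∀ v : W, H.dist ρ v ≤ r) ∧
    (∃ v : W, H.dist ρ v = r) ∧
    (∀ v : W, H.degree v = 1 → H.dist ρ v = r)

set_option linter.unusedSectionVars false


namespace TreeAux

variable {W : Type} [DecidableEq W] {G : SimpleGraph W}

lemma path_length (hT : G.IsTree) {u v : W} {p : G.Walk u v} (hp : p.IsPath) :
    p.length = G.dist u v := by
  obtain ⟨q, hq, hql⟩ := hT.isConnected.exists_path_of_dist u v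
  rw [(hT.existsUnique_path u v).unique hp hq, hql]

lemma mem_support_of_additive (hT : G.IsTree) {u v x : W} {p : G.Walk u v} (hp : p.IsPath)
    (h : G.dist u x + G.dist x v = G.dist u v) : x ∈ p.support := by
  obtain ⟨q1, hq1, hl1⟩ := hT.isConnected.exists_path_of_dist u x
  obtain ⟨q2, hq2, hl2⟩ := hT.isConnected.exists_path_of_dist x v
  have hlen : (q1.append q2).length = G.dist u v := by
    rw [Walk.length_append, hl1, hl2, h]
  have hip : (q1.append q2).IsPath := (q1.append q2).isPath_of_length_eq_dist hlen
  rw [(hT.existsUnique_path u v).unique hp hip, Walk.mem_support_append_iff]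
  exact Or.inl q1.end_mem_support

lemma eq_getVert (hT : G.IsTree) {u v x : W} {p : G.Walk u v} (hp : p.IsPath)
    (h : x ∈ p.support) : x = p.getVert (G.dist u x) := by
  have h1 : (p.takeUntil x h).length = G.dist u x := path_length hT (hp.takeUntil h)
  have h2 := Walk.getVert_append (p.takeUntil x h) (p.dropUntil x h) (G.dist u x)
  rw [p.take_spec h] at h2
  rw [h2, if_neg (by omega), h1, Nat.sub_self, Walk.getVert_zero]

lemma ancestor_unique (hT : G.IsTree) {ρ u x y : W}
    (hx : G.dist ρ x + G.dist x u = G.dist ρ u) (hy : G.dist ρ y + G.dist y u = G.dist ρ u)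
    (hd : G.dist ρ x = G.dist ρ y) : x = y := by
  obtain ⟨p, hp, _⟩ := hT.isConnected.exists_path_of_dist ρ u
  have h1 := mem_support_of_additive hT hp hx
  have h2 := mem_support_of_additive hT hp hy
  rw [eq_getVert hT hp h1, eq_getVert hT hp h2, hd]

lemma additive_of_mem_support (hT : G.IsTree) {u v x : W} {p : G.Walk u v} (hp : p.IsPath)
    (h : x ∈ p.support) : G.dist u x + G.dist x v = G.dist u v := by
  have h1 := path_length hT (hp.takeUntil h)
  have h2 := path_length hT (hp.dropUntil h)
  have h3 := path_length hT hp
  rw [← h3, ← h1, ← h2, ← Walk.length_append, p.take_spec h]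

lemma dist_adj (hT : G.IsTree) {x y : W} (h : G.Adj x y) : G.dist x y = 1 :=
  dist_eq_one_iff_adj.mpr h

lemma dist_zero (hT : G.IsTree) {x y : W} (h : G.dist x y = 0) : x = y :=
  (hT.isConnected.dist_eq_zero_iff).mp h

lemma exists_adj_dist (hT : G.IsTree) {x u : W} (h : G.dist x u ≠ 0) :
    ∃ c, G.Adj x c ∧ G.dist c u + 1 = G.dist x u := by
  obtain ⟨p, hp, hl⟩ := hT.isConnected.exists_path_of_dist x u
  cases p with
  | nil => exact absurd SimpleGraph.dist_self h
  | @cons _ c _ hadj q =>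
    refine ⟨c, hadj, ?_⟩
    have hq := path_length hT hp.of_cons
    rw [Walk.length_cons, hq] at hl
    omega

lemma adj_depth (hT : G.IsTree) (ρ : W) {u v : W} (h : G.Adj u v) :
    G.dist ρ v = G.dist ρ u + 1 ∨ G.dist ρ u = G.dist ρ v + 1 := by
  obtain ⟨p, hp, hl⟩ := hT.isConnected.exists_path_of_dist ρ u
  by_cases hv : v ∈ p.support
  · right
    have hadd := additive_of_mem_support hT hp hv
    have h1 : G.dist v u = 1 := dist_adj hT h.symm
    omega
  · left
    have hcp : ((Walk.cons h.symm p.reverse).reverse).IsPath := by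
      apply Walk.IsPath.reverse
      apply hp.reverse.cons
      rw [Walk.support_reverse, List.mem_reverse]
      exact hv
    have h2 := path_length hT hcp
    rw [Walk.length_reverse, Walk.length_cons, Walk.length_reverse, hl] at h2
    omega

lemma exists_ancestor (hT : G.IsTree) (ρ : W) {u : W} {k : ℕ} (hk : k ≤ G.dist ρ u) :
    ∃ z, G.dist z u = k ∧ G.dist ρ z + k = G.dist ρ u := by
  induction k with
  | zero => exact ⟨u, SimpleGraph.dist_self, by simp [SimpleGraph.dist_self]⟩
  | succ n ih =>
    obtain ⟨z, hz1, hz2⟩ := ih (by omega)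
    have e2 : G.dist z ρ = G.dist ρ z := SimpleGraph.dist_comm
    have hzρ : G.dist z ρ ≠ 0 := by omega
    obtain ⟨c, hc, hcd⟩ := exists_adj_dist hT hzρ
    have hcz : G.dist c z = 1 := dist_adj hT hc.symm
    have t1 : G.dist c u ≤ G.dist c z + G.dist z u := hT.isConnected.dist_triangle
    have t2 : G.dist ρ u ≤ G.dist ρ c + G.dist c u := hT.isConnected.dist_triangle
    have e1 : G.dist c ρ = G.dist ρ c := SimpleGraph.dist_comm
    exact ⟨c, by omega, by omega⟩

lemma exists_meet (hT : G.IsTree) (ρ v : W) : ∀ (n : ℕ) (u : W), G.dist u v = n →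
    ∃ w, G.dist w u + G.dist w v = n ∧ G.dist ρ w + G.dist w u = G.dist ρ u ∧
      G.dist ρ w + G.dist w v = G.dist ρ v := by
  intro n
  induction n with
  | zero =>
    intro u h
    have huv : u = v := dist_zero hT h
    subst huv
    exact ⟨u, by simp [SimpleGraph.dist_self], by simp [SimpleGraph.dist_self],
      by simp [SimpleGraph.dist_self]⟩
  | succ n ih =>
    intro u h
    obtain ⟨u', hadj, hu'⟩ := exists_adj_dist hT (x := u) (u := v) (by omega)
    obtain ⟨w, hw1, hw2, hw3⟩ := ih u' (by omega)
    have huu' : G.dist u u' = 1 := dist_adj hT hadj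
    have hu'u : G.dist u' u = 1 := dist_adj hT hadj.symm
    rcases adj_depth hT ρ hadj with h1 | h2
    · -- u' is a child of u; then u should be the meet
      by_cases ha : G.dist w u' = 0
      · have hwu : w = u' := dist_zero hT ha
        rw [hwu] at hw1 hw2 hw3
        have hself : G.dist u u = 0 := SimpleGraph.dist_self
        have hself' : G.dist u' u' = 0 := SimpleGraph.dist_self
        refine ⟨u, by omega, by omega, by omega⟩
      · exfalso
        have e3 : G.dist u' w = G.dist w u' := SimpleGraph.dist_comm
        obtain ⟨z, hz, hz'⟩ := exists_adj_dist hT (x := u') (u := w) (by omega)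
        have hzu' : G.dist z u' = 1 := dist_adj hT hz.symm
        have t1 : G.dist ρ z ≤ G.dist ρ w + G.dist w z := hT.isConnected.dist_triangle
        have t2 : G.dist ρ u' ≤ G.dist ρ z + G.dist z u' := hT.isConnected.dist_triangle
        have e4 : G.dist w z = G.dist z w := SimpleGraph.dist_comm
        have hdz : G.dist ρ z + 1 = G.dist ρ u' := by omega
        have huz : u = z :=
          ancestor_unique hT (ρ := ρ) (u := u') (x := u) (y := z) (by omega) (by omega) (by omega)
        subst huz
        have t3 : G.dist u v ≤ G.dist u w + G.dist w v := hT.isConnected.dist_triangle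
        have e5 : G.dist u w = G.dist w u := SimpleGraph.dist_comm
        have e6 : G.dist w u = G.dist u w := SimpleGraph.dist_comm
        omega
    · -- u is a child of u'; extend meet
      have t1 : G.dist w u ≤ G.dist w u' + G.dist u' u := hT.isConnected.dist_triangle
      have t2 : G.dist ρ u ≤ G.dist ρ w + G.dist w u := hT.isConnected.dist_triangle
      exact ⟨w, by omega, by omega, hw3⟩


section Counting

variable {W : Type} [Fintype W] [DecidableEq W] (G : SimpleGraph W) [DecidableRel G.Adj] (ρ : W)
  {m r : ℕ}

/-- descendants of `x` at distance `k` below it -/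
noncomputable def desc (x : W) (k : ℕ) : Finset W :=
  univ.filter (fun u => G.dist ρ u = G.dist ρ x + k ∧ G.dist x u = k)

/-- children of `x` -/
noncomputable def chil (x : W) : Finset W :=
  univ.filter (fun c => G.Adj x c ∧ G.dist ρ c = G.dist ρ x + 1)

lemma mem_desc {x u : W} {k : ℕ} :
    u ∈ desc G ρ x k ↔ G.dist ρ u = G.dist ρ x + k ∧ G.dist x u = k := by
  simp [desc]

lemma mem_chil {x c : W} :
    c ∈ chil G ρ x ↔ G.Adj x c ∧ G.dist ρ c = G.dist ρ x + 1 := by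
  simp [chil]

lemma card_chil (hG : IsPerfectRootedMary m r G ρ) {x : W} (hx : G.dist ρ x < r) :
    (chil G ρ x).card = m := by
  obtain ⟨hT, hdeg, hdeg', hle, hex, hleaf⟩ := hG
  classical
  set par : Finset W := univ.filter (fun c => G.Adj x c ∧ G.dist ρ c + 1 = G.dist ρ x) with hpar
  have hsplit : G.neighborFinset x = chil G ρ x ∪ par := by
    ext c
    simp only [mem_neighborFinset, mem_chil, hpar, Finset.mem_filter, Finset.mem_union,
      Finset.mem_univ, true_and]
    constructor
    · intro hadj
      rcases adj_depth hT ρ hadj with h | h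
      · exact Or.inl ⟨hadj, h⟩
      · exact Or.inr ⟨hadj, by omega⟩
    · rintro (⟨h, _⟩ | ⟨h, _⟩) <;> exact h
  have hdisj : Disjoint (chil G ρ x) par := by
    rw [Finset.disjoint_left]
    intro c h1 h2
    rw [mem_chil] at h1
    simp only [hpar, Finset.mem_filter] at h2
    omega
  have hdeg_eq : G.degree x = (chil G ρ x).card + par.card := by
    rw [← card_neighborFinset_eq_degree, hsplit, Finset.card_union_of_disjoint hdisj]
  by_cases hxρ : x = ρ
  · have h0 : G.dist ρ x = 0 := by rw [hxρ]; exact SimpleGraph.dist_self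
    have hparempty : par = ∅ := by
      rw [Finset.eq_empty_iff_forall_notMem]
      intro c hc
      simp only [hpar, Finset.mem_filter] at hc
      omega
    rw [hparempty, hxρ] at hdeg_eq
    have := hdeg (by omega)
    simp at hdeg_eq
    rw [hxρ]
    omega
  · have hxρ' : G.dist x ρ ≠ 0 := fun hh => hxρ (dist_zero hT hh)
    obtain ⟨p0, hp0, hp0d⟩ := exists_adj_dist hT hxρ'
    have e1 : G.dist p0 ρ = G.dist ρ p0 := SimpleGraph.dist_comm
    have e2 : G.dist x ρ = G.dist ρ x := SimpleGraph.dist_comm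
    have hparone : par = {p0} := by
      ext c
      simp only [hpar, Finset.mem_filter, Finset.mem_univ, true_and, Finset.mem_singleton]
      constructor
      · rintro ⟨hadj, hd⟩
        exact ancestor_unique hT (ρ := ρ) (u := x)
          (by have := dist_adj hT hadj.symm; omega)
          (by have := dist_adj hT hp0.symm; omega) (by omega)
      · rintro rfl
        exact ⟨hp0, by omega⟩
    rw [hparone] at hdeg_eq
    simp at hdeg_eq
    rcases hdeg' x hxρ with h1 | h1
    · exact absurd (hleaf x h1) (by omega)
    · omega

lemma desc_zero (hT : G.IsTree) (x : W) : desc G ρ x 0 = {x} := by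
  ext u
  simp only [mem_desc, Finset.mem_singleton]
  constructor
  · rintro ⟨_, h⟩
    exact (dist_zero hT h).symm
  · rintro rfl
    exact ⟨by simp [SimpleGraph.dist_self], SimpleGraph.dist_self⟩

lemma desc_succ (hT : G.IsTree) (x : W) (k : ℕ) :
    desc G ρ x (k + 1) = (chil G ρ x).biUnion (fun c => desc G ρ c k) := by
  ext u
  simp only [mem_desc, Finset.mem_biUnion, mem_chil]
  constructor
  · rintro ⟨hd, hdist⟩
    obtain ⟨c, hc, hcd⟩ := exists_adj_dist hT (x := x) (u := u) (by omega)
    have hcx : G.dist c x = 1 := dist_adj hT hc.symm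
    have t2 : G.dist ρ u ≤ G.dist ρ c + G.dist c u := hT.isConnected.dist_triangle
    have t3 : G.dist ρ c ≤ G.dist ρ x + G.dist x c := hT.isConnected.dist_triangle
    have hxc : G.dist x c = 1 := dist_adj hT hc
    refine ⟨c, ⟨hc, by omega⟩, by omega, by omega⟩
  · rintro ⟨c, ⟨hadj, hcdep⟩, hd, hdist⟩
    have hxc : G.dist x c = 1 := dist_adj hT hadj
    have t1 : G.dist x u ≤ G.dist x c + G.dist c u := hT.isConnected.dist_triangle
    have t2 : G.dist ρ u ≤ G.dist ρ x + G.dist x u := hT.isConnected.dist_triangle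
    refine ⟨by omega, by omega⟩

lemma desc_disjoint (hT : G.IsTree) {c c' : W} (hne : c ≠ c')
    (hd : G.dist ρ c = G.dist ρ c') (k : ℕ) :
    Disjoint (desc G ρ c k) (desc G ρ c' k) := by
  rw [Finset.disjoint_left]
  intro u h1 h2
  rw [mem_desc] at h1 h2
  exact hne (ancestor_unique hT (ρ := ρ) (u := u) (by omega) (by omega) (by omega))

lemma desc_empty (hG : IsPerfectRootedMary m r G ρ) {x : W} {k : ℕ}
    (h : r < G.dist ρ x + k) : desc G ρ x k = ∅ := by
  rw [Finset.eq_empty_iff_forall_notMem]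
  intro u hu
  rw [mem_desc] at hu
  have := hG.2.2.2.1 u
  omega

lemma card_desc (hG : IsPerfectRootedMary m r G ρ) {x : W} {k : ℕ}
    (h : G.dist ρ x + k ≤ r) : (desc G ρ x k).card = m ^ k := by
  induction k generalizing x with
  | zero => rw [desc_zero G ρ hG.1]; simp
  | succ n ih =>
    rw [desc_succ G ρ hG.1, Finset.card_biUnion]
    · rw [Finset.sum_congr rfl (fun c hc => ih (x := c) (by rw [mem_chil] at hc; omega))]
      rw [Finset.sum_const, card_chil G ρ hG (by omega), smul_eq_mul, pow_succ, mul_comm]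
    · intro c hc c' hc' hne
      rw [Finset.mem_coe, mem_chil] at hc hc'
      exact desc_disjoint G ρ hG.1 hne (by omega) n

lemma card_univ_eq (hG : IsPerfectRootedMary m r G ρ) :
    (Fintype.card W) = ∑ j ∈ Finset.range (r + 1), m ^ j := by
  classical
  rw [← Finset.card_univ]
  rw [Finset.card_eq_sum_card_fiberwise (f := fun u => G.dist ρ u)
    (t := Finset.range (r + 1))
    (fun u _ => Finset.mem_range.mpr (show G.dist ρ u < r + 1 by have := hG.2.2.2.1 u; omega))]
  refine Finset.sum_congr rfl (fun j hj => ?_)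
  show (univ.filter (fun u => G.dist ρ u = j)).card = m ^ j
  have hlev : univ.filter (fun u => G.dist ρ u = j) = desc G ρ ρ j := by
    ext u
    simp [mem_desc, SimpleGraph.dist_self]
  rw [hlev, card_desc G ρ hG
    (by have h0 : G.dist ρ ρ = 0 := SimpleGraph.dist_self
        have := Finset.mem_range.mp hj; omega)]

/-- ordered pairs at distance `t` -/
noncomputable def Pset (t : ℕ) : Finset (W × W) :=
  univ.filter (fun p => G.dist p.1 p.2 = t)

/-- pairs at distance `t` whose meet is `w`, with first coordinate at distance `a` below `w` -/
noncomputable def F (t : ℕ) (w : W) (a : ℕ) : Finset (W × W) :=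
  univ.filter (fun p => p.1 ∈ desc G ρ w a ∧ p.2 ∈ desc G ρ w (t - a) ∧ G.dist p.1 p.2 = t)

lemma mem_F {t : ℕ} {w : W} {a : ℕ} {p : W × W} :
    p ∈ F G ρ t w a ↔ p.1 ∈ desc G ρ w a ∧ p.2 ∈ desc G ρ w (t - a) ∧ G.dist p.1 p.2 = t := by
  simp [F]

lemma Pset_eq (hT : G.IsTree) (t : ℕ) :
    Pset G t = (univ ×ˢ Finset.range (t + 1)).biUnion (fun q => F G ρ t q.1 q.2) := by
  ext ⟨u, v⟩
  simp only [Pset, Finset.mem_filter, Finset.mem_univ, true_and, Finset.mem_biUnion]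
  constructor
  · intro hd
    obtain ⟨w, hw1, hw2, hw3⟩ := exists_meet hT ρ v t u hd
    refine ⟨(w, G.dist w u), ?_, ?_⟩
    · have : G.dist w u ∈ Finset.range (t + 1) := Finset.mem_range.mpr (by omega)
      exact Finset.mem_product.mpr ⟨Finset.mem_univ w, this⟩
    · show (u, v) ∈ F G ρ t w (G.dist w u)
      rw [mem_F]
      refine ⟨?_, ?_, hd⟩
      · show u ∈ desc G ρ w (G.dist w u)
        rw [mem_desc]
        exact ⟨by omega, rfl⟩
      · show v ∈ desc G ρ w (t - G.dist w u)
        rw [mem_desc]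
        constructor <;> omega
  · rintro ⟨q, _, hq⟩
    have hq' : (u, v) ∈ F G ρ t q.1 q.2 := hq
    rw [mem_F] at hq'
    exact hq'.2.2

lemma F_pairwise_disjoint (hT : G.IsTree) (t : ℕ) :
    ∀ q ∈ (univ ×ˢ Finset.range (t + 1)), ∀ q' ∈ (univ ×ˢ Finset.range (t + 1)), q ≠ q' →
      Disjoint (F G ρ t q.1 q.2) (F G ρ t q'.1 q'.2) := by
  rintro ⟨w, a⟩ hq ⟨w', a'⟩ hq' hne
  have ha : a < t + 1 := Finset.mem_range.mp (Finset.mem_product.mp hq).2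
  have ha' : a' < t + 1 := Finset.mem_range.mp (Finset.mem_product.mp hq').2
  rw [Finset.disjoint_left]
  rintro ⟨u, v⟩ h1 h2
  have h1' : ((u, v) : W × W) ∈ F G ρ t w a := h1
  have h2' : ((u, v) : W × W) ∈ F G ρ t w' a' := h2
  simp only [mem_F, mem_desc] at h1' h2'
  have hdw : G.dist ρ w = G.dist ρ w' ∧ a = a' := by omega
  have hww : w = w' :=
    ancestor_unique hT (ρ := ρ) (u := u) (by omega) (by omega) (by omega)
  exact hne (by rw [Prod.mk.injEq]; exact ⟨hww, hdw.2⟩)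

lemma F_zero (hT : G.IsTree) (t : ℕ) (w : W) :
    F G ρ t w 0 = {w} ×ˢ desc G ρ w t := by
  ext ⟨u, v⟩
  simp only [mem_F, mem_desc, Finset.mem_product, Finset.mem_singleton, Nat.sub_zero,
    Nat.add_zero]
  constructor
  · rintro ⟨⟨hu1, hu2⟩, hv, _⟩
    exact ⟨(dist_zero hT hu2).symm, hv⟩
  · rintro ⟨h1, hv⟩
    have hw0 : G.dist w u = 0 := by rw [h1]; exact SimpleGraph.dist_self
    have he : G.dist ρ u = G.dist ρ w := by rw [h1]
    have hdv : G.dist u v = G.dist w v := by rw [h1]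
    exact ⟨⟨he, hw0⟩, hv, by omega⟩

lemma F_top (hT : G.IsTree) (t : ℕ) (w : W) :
    F G ρ t w t = desc G ρ w t ×ˢ {w} := by
  ext ⟨u, v⟩
  simp only [mem_F, mem_desc, Finset.mem_product, Finset.mem_singleton, Nat.sub_self,
    Nat.add_zero]
  constructor
  · rintro ⟨hu, ⟨hv1, hv2⟩, _⟩
    exact ⟨hu, (dist_zero hT hv2).symm⟩
  · rintro ⟨hu, h2⟩
    have hw0 : G.dist w v = 0 := by rw [h2]; exact SimpleGraph.dist_self
    have he : G.dist ρ v = G.dist ρ w := by rw [h2]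
    have e1 : G.dist u v = G.dist u w := by rw [h2]
    have e2 : G.dist u w = G.dist w u := SimpleGraph.dist_comm
    exact ⟨hu, ⟨he, hw0⟩, by omega⟩

lemma F_empty (hG : IsPerfectRootedMary m r G ρ) {t : ℕ} {w : W} {a : ℕ}
    (h : r < G.dist ρ w + a ∨ r < G.dist ρ w + (t - a)) : F G ρ t w a = ∅ := by
  rw [Finset.eq_empty_iff_forall_notMem]
  rintro ⟨u, v⟩ hp
  rw [mem_F] at hp
  rcases h with h | h
  · rw [desc_empty G ρ hG h] at hp
    simp at hp
  · rw [desc_empty G ρ hG h] at hp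
    simp at hp

lemma F_mid (hT : G.IsTree) {t : ℕ} {w : W} {a : ℕ} (ha : 1 ≤ a) (hat : a < t) :
    F G ρ t w a = (chil G ρ w).offDiag.biUnion
      (fun q => desc G ρ q.1 (a - 1) ×ˢ desc G ρ q.2 (t - a - 1)) := by
  ext ⟨u, v⟩
  simp only [mem_F, Finset.mem_biUnion]
  constructor
  · rintro ⟨hu, hv, hdist⟩
    have hu' : u ∈ desc G ρ w a := hu
    have hv' : v ∈ desc G ρ w (t - a) := hv
    rw [mem_desc] at hu' hv'
    obtain ⟨hu1, hu2⟩ := hu'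
    obtain ⟨hv1, hv2⟩ := hv'
    obtain ⟨c, hc, hcd⟩ := exists_adj_dist hT (x := w) (u := u) (by omega)
    obtain ⟨c', hc', hcd'⟩ := exists_adj_dist hT (x := w) (u := v) (by omega)
    have hwc : G.dist w c = 1 := dist_adj hT hc
    have hwc' : G.dist w c' = 1 := dist_adj hT hc'
    have t2 : G.dist ρ u ≤ G.dist ρ c + G.dist c u := hT.isConnected.dist_triangle
    have t3 : G.dist ρ c ≤ G.dist ρ w + G.dist w c := hT.isConnected.dist_triangle
    have t4 : G.dist ρ v ≤ G.dist ρ c' + G.dist c' v := hT.isConnected.dist_triangle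
    have t5 : G.dist ρ c' ≤ G.dist ρ w + G.dist w c' := hT.isConnected.dist_triangle
    have hne : c ≠ c' := by
      rintro rfl
      have t6 : G.dist u v ≤ G.dist u c + G.dist c v := hT.isConnected.dist_triangle
      have e1 : G.dist u c = G.dist c u := SimpleGraph.dist_comm
      omega
    refine ⟨(c, c'), ?_, ?_⟩
    · apply Finset.mem_offDiag.mpr
      refine ⟨?_, ?_, hne⟩
      · show c ∈ chil G ρ w
        rw [mem_chil]; exact ⟨hc, by omega⟩
      · show c' ∈ chil G ρ w
        rw [mem_chil]; exact ⟨hc', by omega⟩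
    · show ((u, v) : W × W) ∈ desc G ρ c (a - 1) ×ˢ desc G ρ c' (t - a - 1)
      rw [Finset.mem_product]
      constructor
      · show u ∈ desc G ρ c (a - 1)
        rw [mem_desc]
        constructor <;> omega
      · show v ∈ desc G ρ c' (t - a - 1)
        rw [mem_desc]
        constructor <;> omega
  · rintro ⟨⟨c, c'⟩, hcc, hmem⟩
    have hcc' : (c, c') ∈ (chil G ρ w).offDiag := hcc
    rw [Finset.mem_offDiag] at hcc'
    obtain ⟨hcm, hcm', hne⟩ := hcc'
    have hc : G.Adj w c := ((mem_chil G ρ).mp hcm).1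
    have hcdep : G.dist ρ c = G.dist ρ w + 1 := ((mem_chil G ρ).mp hcm).2
    have hc' : G.Adj w c' := ((mem_chil G ρ).mp hcm').1
    have hcdep' : G.dist ρ c' = G.dist ρ w + 1 := ((mem_chil G ρ).mp hcm').2
    have hmem' : ((u, v) : W × W) ∈ desc G ρ c (a - 1) ×ˢ desc G ρ c' (t - a - 1) := hmem
    rw [Finset.mem_product] at hmem'
    have hum : u ∈ desc G ρ c (a - 1) := hmem'.1
    have hvm : v ∈ desc G ρ c' (t - a - 1) := hmem'.2
    rw [mem_desc] at hum hvm
    obtain ⟨hu1, hu2⟩ := hum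
    obtain ⟨hv1, hv2⟩ := hvm
    have hwc : G.dist w c = 1 := dist_adj hT hc
    have hwc' : G.dist w c' = 1 := dist_adj hT hc'
    have t1 : G.dist w u ≤ G.dist w c + G.dist c u := hT.isConnected.dist_triangle
    have t2 : G.dist ρ u ≤ G.dist ρ w + G.dist w u := hT.isConnected.dist_triangle
    have t1' : G.dist w v ≤ G.dist w c' + G.dist c' v := hT.isConnected.dist_triangle
    have t2' : G.dist ρ v ≤ G.dist ρ w + G.dist w v := hT.isConnected.dist_triangle
    refine ⟨?_, ?_, ?_⟩
    · show u ∈ desc G ρ w a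
      rw [mem_desc]
      constructor <;> omega
    · show v ∈ desc G ρ w (t - a)
      rw [mem_desc]
      constructor <;> omega
    · show G.dist u v = t
      have t6 : G.dist u v ≤ G.dist u w + G.dist w v := hT.isConnected.dist_triangle
      have e1 : G.dist u w = G.dist w u := SimpleGraph.dist_comm
      by_contra hlt
      have hn : G.dist u v < t := by omega
      obtain ⟨x, hx1, hx2, hx3⟩ := exists_meet hT ρ v (G.dist u v) u rfl
      have hdx : G.dist ρ w + 1 ≤ G.dist ρ x := by omega
      obtain ⟨z, hz1, hz2⟩ :=
        exists_ancestor hT ρ (u := x) (k := G.dist ρ x - (G.dist ρ w + 1)) (by omega)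
      have tz : G.dist z u ≤ G.dist z x + G.dist x u := hT.isConnected.dist_triangle
      have tz2 : G.dist ρ u ≤ G.dist ρ z + G.dist z u := hT.isConnected.dist_triangle
      have tz' : G.dist z v ≤ G.dist z x + G.dist x v := hT.isConnected.dist_triangle
      have tz2' : G.dist ρ v ≤ G.dist ρ z + G.dist z v := hT.isConnected.dist_triangle
      have hzc : z = c :=
        ancestor_unique hT (ρ := ρ) (u := u) (by omega) (by omega) (by omega)
      have hzc' : z = c' :=
        ancestor_unique hT (ρ := ρ) (u := v) (by omega) (by omega) (by omega)
      exact hne (hzc ▸ hzc')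

lemma card_F (hG : IsPerfectRootedMary m r G ρ) {t : ℕ} {w : W} {a : ℕ}
    (ht : 1 ≤ t) (ha : a ≤ t) :
    (F G ρ t w a).card =
      if a = 0 ∨ a = t then (if G.dist ρ w + t ≤ r then m ^ t else 0)
      else (if G.dist ρ w + a ≤ r ∧ G.dist ρ w + (t - a) ≤ r
            then (m * m - m) * (m ^ (a - 1) * m ^ (t - a - 1)) else 0) := by
  have hT := hG.1
  by_cases h0 : a = 0 ∨ a = t
  · rw [if_pos h0]
    by_cases hr : G.dist ρ w + t ≤ r
    · rw [if_pos hr]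
      rcases h0 with rfl | rfl
      · rw [F_zero G ρ hT, Finset.card_product, Finset.card_singleton, one_mul,
          card_desc G ρ hG hr]
      · rw [F_top G ρ hT, Finset.card_product, Finset.card_singleton, mul_one,
          card_desc G ρ hG hr]
    · rw [if_neg hr]
      rcases h0 with rfl | rfl
      · rw [F_empty G ρ hG (by omega)]; rfl
      · rw [F_empty G ρ hG (by omega)]; rfl
  · rw [if_neg h0]
    push_neg at h0
    have ha1 : 1 ≤ a := by omega
    have hat : a < t := by omega
    by_cases hr : G.dist ρ w + a ≤ r ∧ G.dist ρ w + (t - a) ≤ r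
    · rw [if_pos hr]
      rw [F_mid G ρ hT ha1 hat, Finset.card_biUnion]
      · have : ∀ q ∈ (chil G ρ w).offDiag,
            (desc G ρ q.1 (a - 1) ×ˢ desc G ρ q.2 (t - a - 1)).card
              = m ^ (a - 1) * m ^ (t - a - 1) := by
          rintro ⟨c, c'⟩ hq
          have hq2 : (c, c') ∈ (chil G ρ w).offDiag := hq
          rw [Finset.mem_offDiag] at hq2
          obtain ⟨h1, h2, h3⟩ := hq2
          have h1' : G.dist ρ c = G.dist ρ w + 1 := ((mem_chil G ρ).mp h1).2
          have h2' : G.dist ρ c' = G.dist ρ w + 1 := ((mem_chil G ρ).mp h2).2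
          show (desc G ρ c (a - 1) ×ˢ desc G ρ c' (t - a - 1)).card = m ^ (a - 1) * m ^ (t - a - 1)
          rw [Finset.card_product, card_desc G ρ hG (by omega), card_desc G ρ hG (by omega)]
        rw [Finset.sum_congr rfl this, Finset.sum_const, smul_eq_mul, Finset.offDiag_card,
          card_chil G ρ hG (by omega)]
      · rintro ⟨c, c'⟩ hq ⟨e, e'⟩ he hne
        have hq2 : (c, c') ∈ (chil G ρ w).offDiag := hq
        have he2 : (e, e') ∈ (chil G ρ w).offDiag := he
        rw [Finset.mem_offDiag] at hq2 he2
        obtain ⟨h1, h2, h3⟩ := hq2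
        obtain ⟨h4, h5, h6⟩ := he2
        have h1' : G.dist ρ c = G.dist ρ w + 1 := ((mem_chil G ρ).mp h1).2
        have h2' : G.dist ρ c' = G.dist ρ w + 1 := ((mem_chil G ρ).mp h2).2
        have h4' : G.dist ρ e = G.dist ρ w + 1 := ((mem_chil G ρ).mp h4).2
        have h5' : G.dist ρ e' = G.dist ρ w + 1 := ((mem_chil G ρ).mp h5).2
        rw [Function.onFun, Finset.disjoint_left]
        rintro ⟨u, v⟩ hm1 hm2
        have hm1' : ((u, v) : W × W) ∈ desc G ρ c (a - 1) ×ˢ desc G ρ c' (t - a - 1) := hm1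
        have hm2' : ((u, v) : W × W) ∈ desc G ρ e (a - 1) ×ˢ desc G ρ e' (t - a - 1) := hm2
        simp only [Finset.mem_product, mem_desc] at hm1' hm2'
        have hce : c = e :=
          ancestor_unique hT (ρ := ρ) (u := u) (by omega) (by omega) (by omega)
        have hce' : c' = e' :=
          ancestor_unique hT (ρ := ρ) (u := v) (by omega) (by omega) (by omega)
        exact hne (by rw [Prod.mk.injEq]; exact ⟨hce, hce'⟩)
    · rw [if_neg hr]
      rw [F_empty G ρ hG (by omega)]
      rfl

/-- coefficient: number of ordered pairs in `F t w a` as function of the depth of `w` -/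
def cF (m r t j a : ℕ) : ℕ :=
  if a = 0 ∨ a = t then (if j + t ≤ r then m ^ t else 0)
  else (if j + a ≤ r ∧ j + (t - a) ≤ r then (m * m - m) * (m ^ (a - 1) * m ^ (t - a - 1)) else 0)

lemma card_Pset (hG : IsPerfectRootedMary m r G ρ) {t : ℕ} (ht : 1 ≤ t) :
    (Pset G t).card = ∑ j ∈ Finset.range (r + 1), m ^ j * (∑ a ∈ Finset.range (t + 1), cF m r t j a) := by
  rw [Pset_eq G ρ hG.1 t, Finset.card_biUnion (F_pairwise_disjoint G ρ hG.1 t)]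
  rw [Finset.sum_product]
  have hstep : ∀ w : W, ∑ a ∈ Finset.range (t + 1), (F G ρ t w a).card
      = ∑ a ∈ Finset.range (t + 1), cF m r t (G.dist ρ w) a := by
    intro w
    refine Finset.sum_congr rfl (fun a haa => ?_)
    rw [card_F G ρ hG ht (by have := Finset.mem_range.mp haa; omega)]
    rfl
  calc ∑ w : W, ∑ a ∈ Finset.range (t + 1), (F G ρ t w a).card
      = ∑ w : W, ∑ a ∈ Finset.range (t + 1), cF m r t (G.dist ρ w) a :=
        Finset.sum_congr rfl (fun w _ => hstep w)
    _ = ∑ j ∈ Finset.range (r + 1), ∑ w ∈ univ.filter (fun w => G.dist ρ w = j),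
          ∑ a ∈ Finset.range (t + 1), cF m r t (G.dist ρ w) a := by
        exact (Finset.sum_fiberwise_of_maps_to
          (fun w _ => Finset.mem_range.mpr (show G.dist ρ w < r + 1 by
            have := hG.2.2.2.1 w; omega)) _).symm
    _ = ∑ j ∈ Finset.range (r + 1), m ^ j * (∑ a ∈ Finset.range (t + 1), cF m r t j a) := by
        refine Finset.sum_congr rfl (fun j hj => ?_)
        have h1 : ∀ w ∈ univ.filter (fun w => G.dist ρ w = j),
            ∑ a ∈ Finset.range (t + 1), cF m r t (G.dist ρ w) a
              = ∑ a ∈ Finset.range (t + 1), cF m r t j a := by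
          intro w hw
          rw [(Finset.mem_filter.mp hw).2]
        rw [Finset.sum_congr rfl h1, Finset.sum_const, smul_eq_mul]
        congr 1
        show (univ.filter (fun u => G.dist ρ u = j)).card = m ^ j
        have hlev : univ.filter (fun u => G.dist ρ u = j) = desc G ρ ρ j := by
          ext u
          simp [mem_desc, SimpleGraph.dist_self]
        rw [hlev, card_desc G ρ hG
          (by have h0 : G.dist ρ ρ = 0 := SimpleGraph.dist_self
              have := Finset.mem_range.mp hj; omega)]

lemma card_Pset_eq_two_mul (hT : G.IsTree) {t : ℕ} (ht : 1 ≤ t) :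
    (Pset G t).card = 2 * pathCount G t := by
  classical
  rw [pathCount]
  rw [Finset.card_eq_sum_card_fiberwise (f := fun p : W × W => s(p.1, p.2)) (s := Pset G t)
    (t := univ.filter fun p : Sym2 W => ∃ u v : W, p = s(u, v) ∧ G.dist u v = t)
    (by
      rintro ⟨x, y⟩ hx
      have hx' : G.dist x y = t := by
        have : ((x, y) : W × W) ∈ Pset G t := hx
        simpa [Pset] using this
      simp only [Finset.mem_coe, Finset.mem_filter, Finset.mem_univ, true_and]
      exact ⟨x, y, rfl, hx'⟩)]
  rw [Finset.sum_congr rfl (fun p2 hp2 => ?_), Finset.sum_const, smul_eq_mul, mul_comm]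
  obtain ⟨u, v, rfl, hd⟩ := (Finset.mem_filter.mp hp2).2
  have hne : u ≠ v := by
    intro h
    rw [h, SimpleGraph.dist_self] at hd
    omega
  have hfib : (Pset G t).filter (fun p => s(p.1, p.2) = s(u, v))
      = ({(u, v), (v, u)} : Finset (W × W)) := by
    ext ⟨x, y⟩
    simp only [Finset.mem_filter, Pset, Finset.mem_univ, true_and, Finset.mem_insert,
      Finset.mem_singleton, Prod.mk.injEq]
    constructor
    · rintro ⟨hdist, hs⟩
      have := Sym2.eq_iff.mp hs
      tauto
    · rintro (⟨rfl, rfl⟩ | ⟨rfl, rfl⟩)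
      · exact ⟨hd, rfl⟩
      · refine ⟨by rw [SimpleGraph.dist_comm]; exact hd, Sym2.eq_swap⟩
  rw [hfib]
  rw [Finset.card_insert_of_notMem (by
    intro hmem
    rw [Finset.mem_singleton, Prod.mk.injEq] at hmem
    exact hne hmem.1), Finset.card_singleton]

section Ball

/-- ball of radius `d0` around the root -/
def ballSet (d0 : ℕ) : Set W := {v : W | G.dist ρ v ≤ d0}

noncomputable instance ballDec (d0 : ℕ) : DecidablePred (· ∈ ballSet G ρ d0) :=
  fun v => (inferInstance : Decidable (G.dist ρ v ≤ d0))

instance ballAdjDec (d0 : ℕ) : DecidableRel (G.induce (ballSet G ρ d0)).Adj :=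
  fun a b => (inferInstance : Decidable (G.Adj ↑a ↑b))

variable (d0 : ℕ)

/-- the root of the ball -/
def ballRoot : ↥(ballSet G ρ d0) :=
  ⟨ρ, by show G.dist ρ ρ ≤ d0; rw [SimpleGraph.dist_self]; omega⟩

lemma ballWalk (hT : G.IsTree) : ∀ (n : ℕ) (v : ↥(ballSet G ρ d0)), G.dist ρ ↑v = n →
    ∃ p : (G.induce (ballSet G ρ d0)).Walk (ballRoot G ρ d0) v, p.length = n := by
  intro n
  induction n with
  | zero =>
    intro v hv
    have : v = ballRoot G ρ d0 := Subtype.ext (dist_zero hT hv).symm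
    subst this
    exact ⟨Walk.nil, rfl⟩
  | succ n ih =>
    intro v hv
    have hvρ : G.dist (↑v : W) ρ ≠ 0 := by rw [SimpleGraph.dist_comm]; omega
    obtain ⟨c, hc, hcd⟩ := exists_adj_dist hT hvρ
    have hcρ : G.dist ρ c = n := by
      have e : G.dist c ρ = G.dist ρ c := SimpleGraph.dist_comm
      have e2 : G.dist (↑v : W) ρ = G.dist ρ ↑v := SimpleGraph.dist_comm
      omega
    have hcb : c ∈ ballSet G ρ d0 := by
      show G.dist ρ c ≤ d0
      have hvb : G.dist ρ ↑v ≤ d0 := v.2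
      omega
    obtain ⟨p, hp⟩ := ih ⟨c, hcb⟩ hcρ
    refine ⟨p.concat ?_, ?_⟩
    · show G.Adj c ↑v
      exact hc.symm
    · rw [Walk.length_concat, hp]

lemma ballReachable (hT : G.IsTree) (v : ↥(ballSet G ρ d0)) :
    (G.induce (ballSet G ρ d0)).Reachable (ballRoot G ρ d0) v := by
  obtain ⟨p, _⟩ := ballWalk G ρ d0 hT (G.dist ρ ↑v) v rfl
  exact ⟨p⟩

lemma ballDist (hT : G.IsTree) (v : ↥(ballSet G ρ d0)) :
    (G.induce (ballSet G ρ d0)).dist (ballRoot G ρ d0) v = G.dist ρ ↑v := by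
  apply le_antisymm
  · obtain ⟨p, hp⟩ := ballWalk G ρ d0 hT (G.dist ρ ↑v) v rfl
    exact hp ▸ SimpleGraph.dist_le p
  · obtain ⟨p, hp⟩ := (ballReachable G ρ d0 hT v).exists_walk_length_eq_dist
    have := SimpleGraph.dist_le (p.map (SimpleGraph.Embedding.induce (G := G) (ballSet G ρ d0)).toHom)
    rw [Walk.length_map, hp] at this
    exact this

lemma ballConnected (hT : G.IsTree) : (G.induce (ballSet G ρ d0)).Connected := by
  haveI : Nonempty ↥(ballSet G ρ d0) := ⟨ballRoot G ρ d0⟩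
  exact ⟨fun a b => (ballReachable G ρ d0 hT a).symm.trans (ballReachable G ρ d0 hT b)⟩

lemma ballTree (hT : G.IsTree) : (G.induce (ballSet G ρ d0)).IsTree := by
  refine ⟨ballConnected G ρ d0 hT, ?_⟩
  intro v c hc
  have hinj : Function.Injective (SimpleGraph.Embedding.induce (G := G) (ballSet G ρ d0)).toHom :=
    Subtype.coe_injective
  exact hT.IsAcyclic _ ((Walk.map_isCycle_iff_of_injective hinj).mpr hc)

lemma ballDegree_lt (hT : G.IsTree) {v : ↥(ballSet G ρ d0)} (h : G.dist ρ ↑v < d0) :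
    (G.induce (ballSet G ρ d0)).degree v = G.degree ↑v := by
  rw [← card_neighborFinset_eq_degree, ← card_neighborFinset_eq_degree]
  apply Finset.card_bij (fun (x : ↥(ballSet G ρ d0)) _ => (x : W))
  · intro a ha
    rw [mem_neighborFinset] at ha ⊢
    exact ha
  · intro a _ b _ hab
    exact Subtype.ext hab
  · intro b hb
    rw [mem_neighborFinset] at hb
    have hbb : b ∈ ballSet G ρ d0 := by
      show G.dist ρ b ≤ d0
      rcases adj_depth hT ρ hb with h1 | h1 <;> omega
    refine ⟨⟨b, hbb⟩, ?_, rfl⟩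
    rw [mem_neighborFinset]
    exact hb

lemma ballDegree_top (hT : G.IsTree) {v : ↥(ballSet G ρ d0)} (hv0 : (v : W) ≠ ρ)
    (h : G.dist ρ ↑v = d0) : (G.induce (ballSet G ρ d0)).degree v = 1 := by
  have hvρ : G.dist (↑v : W) ρ ≠ 0 := fun hh => hv0 (dist_zero hT hh)
  obtain ⟨p0, hp0, hp0d⟩ := exists_adj_dist hT hvρ
  have e1 : G.dist p0 ρ = G.dist ρ p0 := SimpleGraph.dist_comm
  have e2 : G.dist (↑v : W) ρ = G.dist ρ ↑v := SimpleGraph.dist_comm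
  have hp0b : p0 ∈ ballSet G ρ d0 := by
    show G.dist ρ p0 ≤ d0
    omega
  rw [← card_neighborFinset_eq_degree]
  have : (G.induce (ballSet G ρ d0)).neighborFinset v = {⟨p0, hp0b⟩} := by
    ext c
    rw [mem_neighborFinset, Finset.mem_singleton]
    constructor
    · intro hadj
      have hadj' : G.Adj ↑v ↑c := hadj
      have hcb : G.dist ρ ↑c ≤ d0 := c.2
      have hcd : G.dist ρ (↑c : W) + 1 = G.dist ρ ↑v := by
        rcases adj_depth hT ρ hadj' with h1 | h1 <;> omega
      apply Subtype.ext
      exact (show (↑c : W) = p0 from ancestor_unique hT (ρ := ρ) (u := (↑v : W))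
        (by have := dist_adj hT hadj'.symm; omega)
        (by have := dist_adj hT hp0.symm; omega)
        (by omega))
    · rintro rfl
      show G.Adj ↑v p0
      exact hp0
  rw [this, Finset.card_singleton]

lemma ball_perfect (hG : IsPerfectRootedMary m r G ρ) (hm : 2 ≤ m) (hd0 : d0 ≤ r) :
    IsPerfectRootedMary m d0 (G.induce (ballSet G ρ d0)) (ballRoot G ρ d0) := by
  obtain ⟨hT, hdeg, hdeg', hle, hex, hleaf⟩ := hG
  have hGfull : IsPerfectRootedMary m r G ρ := ⟨hT, hdeg, hdeg', hle, hex, hleaf⟩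
  have hroot0 : G.dist ρ (↑(ballRoot G ρ d0) : W) = 0 := SimpleGraph.dist_self
  refine ⟨ballTree G ρ d0 hT, ?_, ?_, ?_, ?_, ?_⟩
  · intro hd0pos
    rw [ballDegree_lt G ρ d0 hT (by omega)]
    exact hdeg (by omega)
  · intro v hv
    have hv' : (↑v : W) ≠ ρ := fun hh => hv (Subtype.ext hh)
    have hvb : G.dist ρ ↑v ≤ d0 := v.2
    by_cases hcase : G.dist ρ ↑v < d0
    · rw [ballDegree_lt G ρ d0 hT hcase]
      exact hdeg' ↑v hv'
    · exact Or.inl (ballDegree_top G ρ d0 hT hv' (by omega))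
  · intro v
    rw [ballDist G ρ d0 hT]
    exact v.2
  · have hpos : 0 < m ^ d0 := by positivity
    have h00 : G.dist ρ ρ = 0 := SimpleGraph.dist_self
    have hne : (desc G ρ ρ d0).Nonempty := by
      rw [← Finset.card_pos, card_desc G ρ hGfull (by omega)]
      exact hpos
    obtain ⟨u, hu⟩ := hne
    rw [mem_desc] at hu
    have hub : u ∈ ballSet G ρ d0 := by
      show G.dist ρ u ≤ d0
      omega
    refine ⟨⟨u, hub⟩, ?_⟩
    rw [ballDist G ρ d0 hT]
    show G.dist ρ u = d0
    omega
  · intro v hv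
    rw [ballDist G ρ d0 hT]
    by_contra hne
    have hvb : G.dist ρ ↑v ≤ d0 := v.2
    have hcase : G.dist ρ ↑v < d0 := by omega
    rw [ballDegree_lt G ρ d0 hT hcase] at hv
    by_cases hv' : (↑v : W) = ρ
    · rw [hv'] at hv
      have := hdeg (by omega)
      omega
    · rcases hdeg' ↑v hv' with h1 | h1
      · have := hleaf ↑v h1
        omega
      · omega

lemma card_ball (hG : IsPerfectRootedMary m r G ρ) (hd0 : d0 ≤ r) :
    Fintype.card ↥(ballSet G ρ d0) = ∑ j ∈ Finset.range (d0 + 1), m ^ j := by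
  classical
  rw [Fintype.card_subtype]
  rw [Finset.card_eq_sum_card_fiberwise (f := fun u => G.dist ρ u)
    (s := univ.filter (· ∈ ballSet G ρ d0)) (t := Finset.range (d0 + 1))
    (by
      intro u hu
      have : G.dist ρ u ≤ d0 := (Finset.mem_filter.mp hu).2
      exact Finset.mem_range.mpr (show G.dist ρ u < d0 + 1 by omega))]
  refine Finset.sum_congr rfl (fun j hj => ?_)
  have hj' : j ≤ d0 := by have := Finset.mem_range.mp hj; omega
  show ((univ.filter (· ∈ ballSet G ρ d0)).filter (fun u => G.dist ρ u = j)).card = m ^ j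
  have : (univ.filter (· ∈ ballSet G ρ d0)).filter (fun u => G.dist ρ u = j)
      = desc G ρ ρ j := by
    ext u
    simp only [Finset.mem_filter, Finset.mem_univ, true_and, mem_desc]
    constructor
    · rintro ⟨h1, h2⟩
      rw [SimpleGraph.dist_self]
      exact ⟨by omega, h2⟩
    · rintro ⟨h1, h2⟩
      rw [SimpleGraph.dist_self] at h1
      constructor
      · show G.dist ρ u ≤ d0
        omega
      · omega
  rw [this, card_desc G ρ hG (by rw [SimpleGraph.dist_self]; omega)]

end Ball

end Counting

section Arith

lemma cF_eq {m r t j a : ℕ} (ha : a ≤ t) :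
    cF m r t j a = if j + max a (t - a) ≤ r then
      (if a = 0 ∨ a = t then m ^ t
       else (m * m - m) * (m ^ (a - 1) * m ^ (t - a - 1))) else 0 := by
  unfold cF
  split_ifs <;> first | rfl | omega

lemma sum_j_cF {m r t a : ℕ} (ha : a ≤ t) (htr : t ≤ r) :
    ∑ j ∈ Finset.range (r + 1), m ^ j * cF m r t j a
      = (if a = 0 ∨ a = t then m ^ t
         else (m * m - m) * (m ^ (a - 1) * m ^ (t - a - 1)))
        * ∑ j ∈ Finset.range (r - max a (t - a) + 1), m ^ j := by
  set C := (if a = 0 ∨ a = t then m ^ t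
         else (m * m - m) * (m ^ (a - 1) * m ^ (t - a - 1))) with hC
  calc ∑ j ∈ Finset.range (r + 1), m ^ j * cF m r t j a
      = ∑ j ∈ Finset.range (r + 1), (if j + max a (t - a) ≤ r then C * m ^ j else 0) := by
        refine Finset.sum_congr rfl fun j hj => ?_
        rw [cF_eq ha, ← hC]
        split_ifs with h
        · ring
        · ring
    _ = ∑ j ∈ (Finset.range (r + 1)).filter (fun j => j + max a (t - a) ≤ r), C * m ^ j :=
        (Finset.sum_filter _ _).symm
    _ = ∑ j ∈ Finset.range (r - max a (t - a) + 1), C * m ^ j := by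
        congr 1
        ext j
        simp only [Finset.mem_filter, Finset.mem_range]
        omega
    _ = C * ∑ j ∈ Finset.range (r - max a (t - a) + 1), m ^ j := by
        rw [Finset.mul_sum]

lemma sum_range_split (s' : ℕ) (f : ℕ → ℕ) :
    ∑ a ∈ Finset.range (2 * s' + 2 + 1), f a
      = f 0 + ((∑ x ∈ Finset.range (s' + 1), f (x + 1))
        + (∑ x ∈ Finset.range s', f (s' + 2 + x)) + f (2 * s' + 2)) := by
  rw [Finset.sum_range_succ]
  rw [show 2 * s' + 2 = 2 * s' + 1 + 1 by omega]
  rw [Finset.sum_range_succ']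
  rw [show 2 * s' + 1 = s' + 1 + s' by omega]
  rw [Finset.sum_range_add]
  have : ∑ x ∈ Finset.range s', f (s' + 1 + x + 1) = ∑ x ∈ Finset.range s', f (s' + 2 + x) := by
    refine Finset.sum_congr rfl fun x _ => ?_
    rw [show s' + 1 + x + 1 = s' + 2 + x by omega]
  rw [show (∑ x ∈ Finset.range s', f (s' + 1 + x + 1)) = ∑ x ∈ Finset.range s', f (s' + 2 + x)
    from this]
  ring

lemma sum_a_decomp (m s' e : ℕ) (g : ℕ → ℕ) :
    ∑ a ∈ Finset.range (2 * s' + 2 + 1),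
      (if a = 0 ∨ a = 2 * s' + 2 then m ^ (2 * s' + 2)
       else (m * m - m) * (m ^ (a - 1) * m ^ (2 * s' + 2 - a - 1)))
      * g ((2 * s' + 2 + e) - max a (2 * s' + 2 - a) + 1)
    = 2 * m ^ (2 * s' + 2) * g (e + 1)
      + (m * m - m) * m ^ (2 * s')
        * ((∑ i ∈ Finset.range (s' + 1), g (e + 2 + i))
           + (∑ i ∈ Finset.range s', g (e + 2 + i))) := by
  have h0 : (if (0 : ℕ) = 0 ∨ (0 : ℕ) = 2 * s' + 2 then m ^ (2 * s' + 2)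
       else (m * m - m) * (m ^ (0 - 1) * m ^ (2 * s' + 2 - 0 - 1)))
      * g ((2 * s' + 2 + e) - max 0 (2 * s' + 2 - 0) + 1)
      = m ^ (2 * s' + 2) * g (e + 1) := by
    rw [if_pos (Or.inl rfl),
      show (2 * s' + 2 + e) - max 0 (2 * s' + 2 - 0) + 1 = e + 1 by omega]
  have htop : (if 2 * s' + 2 = 0 ∨ 2 * s' + 2 = 2 * s' + 2 then m ^ (2 * s' + 2)
       else (m * m - m) * (m ^ (2 * s' + 2 - 1) * m ^ (2 * s' + 2 - (2 * s' + 2) - 1)))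
      * g ((2 * s' + 2 + e) - max (2 * s' + 2) (2 * s' + 2 - (2 * s' + 2)) + 1)
      = m ^ (2 * s' + 2) * g (e + 1) := by
    rw [if_pos (Or.inr rfl),
      show (2 * s' + 2 + e) - max (2 * s' + 2) (2 * s' + 2 - (2 * s' + 2)) + 1 = e + 1 by omega]
  have hm1 : ∑ x ∈ Finset.range (s' + 1),
      (if x + 1 = 0 ∨ x + 1 = 2 * s' + 2 then m ^ (2 * s' + 2)
       else (m * m - m) * (m ^ (x + 1 - 1) * m ^ (2 * s' + 2 - (x + 1) - 1)))
      * g ((2 * s' + 2 + e) - max (x + 1) (2 * s' + 2 - (x + 1)) + 1)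
      = ∑ x ∈ Finset.range (s' + 1), (m * m - m) * m ^ (2 * s') * g (e + 2 + x) := by
    refine Finset.sum_congr rfl fun x hx => ?_
    have hx' : x ≤ s' := by have := Finset.mem_range.mp hx; omega
    rw [if_neg (by omega), ← pow_add,
      show (x + 1 - 1) + (2 * s' + 2 - (x + 1) - 1) = 2 * s' by omega,
      show (2 * s' + 2 + e) - max (x + 1) (2 * s' + 2 - (x + 1)) + 1 = e + 2 + x by omega]
  have hm2 : ∑ x ∈ Finset.range s',
      (if s' + 2 + x = 0 ∨ s' + 2 + x = 2 * s' + 2 then m ^ (2 * s' + 2)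
       else (m * m - m) * (m ^ (s' + 2 + x - 1) * m ^ (2 * s' + 2 - (s' + 2 + x) - 1)))
      * g ((2 * s' + 2 + e) - max (s' + 2 + x) (2 * s' + 2 - (s' + 2 + x)) + 1)
      = ∑ x ∈ Finset.range s', (m * m - m) * m ^ (2 * s') * g (e + 2 + x) := by
    have step : ∀ x ∈ Finset.range s',
        (if s' + 2 + x = 0 ∨ s' + 2 + x = 2 * s' + 2 then m ^ (2 * s' + 2)
         else (m * m - m) * (m ^ (s' + 2 + x - 1) * m ^ (2 * s' + 2 - (s' + 2 + x) - 1)))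
        * g ((2 * s' + 2 + e) - max (s' + 2 + x) (2 * s' + 2 - (s' + 2 + x)) + 1)
        = (fun y => (m * m - m) * m ^ (2 * s') * g (e + 2 + y)) (s' - 1 - x) := by
      intro x hx
      have hx' : x < s' := Finset.mem_range.mp hx
      show _ = (m * m - m) * m ^ (2 * s') * g (e + 2 + (s' - 1 - x))
      rw [if_neg (by omega), ← pow_add,
        show (s' + 2 + x - 1) + (2 * s' + 2 - (s' + 2 + x) - 1) = 2 * s' by omega,
        show (2 * s' + 2 + e) - max (s' + 2 + x) (2 * s' + 2 - (s' + 2 + x)) + 1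
          = e + 2 + (s' - 1 - x) by omega]
    rw [Finset.sum_congr rfl step]
    exact Finset.sum_range_reflect (fun y => (m * m - m) * m ^ (2 * s') * g (e + 2 + y)) s' 
  rw [sum_range_split s' (fun a =>
      (if a = 0 ∨ a = 2 * s' + 2 then m ^ (2 * s' + 2)
       else (m * m - m) * (m ^ (a - 1) * m ^ (2 * s' + 2 - a - 1)))
      * g ((2 * s' + 2 + e) - max a (2 * s' + 2 - a) + 1))]
  rw [h0, htop, hm1, hm2, ← Finset.mul_sum, ← Finset.mul_sum]
  ring

lemma key_q (m s' e : ℕ) (hm : 2 ≤ m) :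
    ((2 * m ^ (2 * s' + 2) * (∑ j ∈ Finset.range (e + 1), m ^ j)
      + (m * m - m) * m ^ (2 * s')
        * ((∑ i ∈ Finset.range (s' + 1), ∑ j ∈ Finset.range (e + 2 + i), m ^ j)
           + (∑ i ∈ Finset.range s', ∑ j ∈ Finset.range (e + 2 + i), m ^ j)) : ℕ) : ℚ)
    = 2 * ((1 / 2) * ((m : ℚ) + 1) * (m : ℚ) ^ s'
        * ((∑ j ∈ Finset.range (2 * s' + 2 + e + 1), (m : ℚ) ^ j)
           - ∑ j ∈ Finset.range (s' + 1), (m : ℚ) ^ j)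
        - ((s' : ℚ) + 1) * (m : ℚ) ^ (2 * s' + 1)) := by
  have hq2 : (2 : ℚ) ≤ (m : ℚ) := by exact_mod_cast hm
  have hq1 : (m : ℚ) ≠ 1 := by intro h; rw [h] at hq2; norm_num at hq2
  have hq0 : (m : ℚ) - 1 ≠ 0 := fun h => hq1 (by linarith)
  have hmm : m ≤ m * m := Nat.le_mul_of_pos_left m (by omega)
  have hB : ∀ n : ℕ, (∑ i ∈ Finset.range n, ∑ j ∈ Finset.range (e + 2 + i), (m : ℚ) ^ j)
      = ((m : ℚ) ^ (e + 2) * (((m : ℚ) ^ n - 1) / ((m : ℚ) - 1)) - n) / ((m : ℚ) - 1) := by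
    intro n
    have h1 : ∀ i ∈ Finset.range n, (∑ j ∈ Finset.range (e + 2 + i), (m : ℚ) ^ j)
        = ((m : ℚ) ^ (e + 2) * (m : ℚ) ^ i - 1) / ((m : ℚ) - 1) := by
      intro i _
      rw [geom_sum_eq hq1, pow_add]
    rw [Finset.sum_congr rfl h1, ← Finset.sum_div, Finset.sum_sub_distrib,
      ← Finset.mul_sum, geom_sum_eq hq1]
    simp
  push_cast [Nat.cast_sub hmm]
  rw [hB, hB, geom_sum_eq hq1, geom_sum_eq hq1, geom_sum_eq hq1]
  field_simp
  push_cast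
  ring

end Arith

end TreeAux


theorem rooted_path_count_even_small (m r : ℕ) (hm : 2 ≤ m)
    {W : Type} [Fintype W] [DecidableEq W] (G : SimpleGraph W) [DecidableRel G.Adj]
    (ρ : W) (hG : IsPerfectRootedMary m r G ρ)
    (VR : ℕ → ℚ)
    (hVR : ∀ (d : ℕ) (X : Type) [Fintype X] (H : SimpleGraph X) [DecidableRel H.Adj]
      (ρ' : X), IsPerfectRootedMary m d H ρ' → (Fintype.card X : ℚ) = VR d)
    (t : ℕ) (ht : Even t) (ht1 : 1 ≤ t) (htr : t ≤ r) :
    (pathCount G t : ℚ) =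
      (1 / 2) * ((m : ℚ) + 1) * (m : ℚ) ^ (t / 2 - 1) * (VR r - VR (t / 2 - 1)) -
        ((t / 2 : ℕ) : ℚ) * (m : ℚ) ^ (t - 1) := by
  classical
  obtain ⟨c, hc⟩ := ht
  set s' := t / 2 - 1 with hs'
  have ht' : t = 2 * s' + 2 := by omega
  set e := r - t with he
  have hr' : r = 2 * s' + 2 + e := by omega
  have hσ : t / 2 = s' + 1 := by omega
  -- VR values
  have hVr : VR r = ∑ j ∈ Finset.range (r + 1), (m : ℚ) ^ j := by
    rw [← hVR r W G ρ hG, TreeAux.card_univ_eq G ρ hG]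
    push_cast
    rfl
  have hperf := TreeAux.ball_perfect G ρ (t / 2 - 1) hG hm (by omega)
  have hVd : VR (t / 2 - 1) = ∑ j ∈ Finset.range (s' + 1), (m : ℚ) ^ j := by
    rw [← hVR (t / 2 - 1) _ _ _ hperf, TreeAux.card_ball G ρ (t / 2 - 1) hG (by omega)]
    push_cast
    rfl
  -- ordered pair count
  have hN := TreeAux.card_Pset G ρ hG ht1
  have h2N := TreeAux.card_Pset_eq_two_mul G hG.1 ht1
  have hswap : ∑ j ∈ Finset.range (r + 1), m ^ j * (∑ a ∈ Finset.range (t + 1), TreeAux.cF m r t j a)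
      = ∑ a ∈ Finset.range (t + 1), ∑ j ∈ Finset.range (r + 1), m ^ j * TreeAux.cF m r t j a := by
    rw [Finset.sum_congr rfl (fun j _ => Finset.mul_sum _ _ _)]
    exact Finset.sum_comm
  have hstep : ∑ a ∈ Finset.range (t + 1), ∑ j ∈ Finset.range (r + 1), m ^ j * TreeAux.cF m r t j a
      = ∑ a ∈ Finset.range (t + 1),
          (if a = 0 ∨ a = t then m ^ t
           else (m * m - m) * (m ^ (a - 1) * m ^ (t - a - 1)))
          * ∑ j ∈ Finset.range (r - max a (t - a) + 1), m ^ j := by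
    refine Finset.sum_congr rfl fun a ha => ?_
    exact TreeAux.sum_j_cF (by have := Finset.mem_range.mp ha; omega) htr
  have hdecomp := TreeAux.sum_a_decomp m s' e (fun n => ∑ j ∈ Finset.range n, m ^ j)
  have htotal : (TreeAux.Pset G t).card
      = 2 * m ^ (2 * s' + 2) * (∑ j ∈ Finset.range (e + 1), m ^ j)
        + (m * m - m) * m ^ (2 * s')
          * ((∑ i ∈ Finset.range (s' + 1), ∑ j ∈ Finset.range (e + 2 + i), m ^ j)
             + (∑ i ∈ Finset.range s', ∑ j ∈ Finset.range (e + 2 + i), m ^ j)) := by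
    rw [hN, hswap, hstep]
    rw [ht', hr'] at *
    exact hdecomp
  have hkey := TreeAux.key_q m s' e hm
  rw [← htotal] at hkey
  rw [h2N] at hkey
  push_cast at hkey
  have hgoal2 : (pathCount G t : ℚ)
      = (1 / 2) * ((m : ℚ) + 1) * (m : ℚ) ^ s'
        * ((∑ j ∈ Finset.range (2 * s' + 2 + e + 1), (m : ℚ) ^ j)
           - ∑ j ∈ Finset.range (s' + 1), (m : ℚ) ^ j)
        - ((s' : ℚ) + 1) * (m : ℚ) ^ (2 * s' + 1) := by linarith
  rw [hgoal2, hVr, hVd]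
  rw [hσ, show t - 1 = 2 * s' + 1 by omega, hr']
  push_cast
  ring
end
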